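/- arXiv:2012.14562 — 5 statements merged into one kernel-verified Lean document; each statement's English description precedes it below -/
import Mathlib

section
/- Let 0 < α < 2, β > 0, C₀ ∈ ℝ, and λ₀ > 0 be such that 2β/(2−α) + C₀ μ^{2−α} > 0 for all μ ∈ (0, λ₀]. Define 𝓕(λ) := ∫_λ^{λ₀} μ^{−α/2−1} · (2β/(2−α) + C₀ μ^{2−α})^{−1/2} dμ for λ ∈ (0, λ₀]. Then there exists a constant C > 0 (depending on α, β, C₀, λ₀) such that for all λ ∈ (0, λ₀]: |𝓕(λ) − (2/α) · (2β/(2−α))^{−1/2} · λ^{−α/2}| ≤ C (λ^{−α/4} + λ^{2−3α/2}). -/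
open MeasureTheory intervalIntegral

lemma aux_rpow_neg_half {a : ℝ} (ha : 0 < a) : a ^ (-(1:ℝ)/2) = (Real.sqrt a)⁻¹ := by
  rw [show (-(1:ℝ)/2) = -(1/2) by ring, Real.rpow_neg ha.le, Real.sqrt_eq_rpow]

lemma aux_diff (m a b : ℝ) (hm : 0 < m) (ha : m ≤ a) (hb : m ≤ b) :
    |a ^ (-(1:ℝ)/2) - b ^ (-(1:ℝ)/2)| ≤ |a - b| / (2 * m * Real.sqrt m) := by
  have ha0 : 0 < a := hm.trans_le ha
  have hb0 : 0 < b := hm.trans_le hb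
  have hsa : 0 < Real.sqrt a := Real.sqrt_pos.mpr ha0
  have hsb : 0 < Real.sqrt b := Real.sqrt_pos.mpr hb0
  have hsm : 0 < Real.sqrt m := Real.sqrt_pos.mpr hm
  have hsma : Real.sqrt m ≤ Real.sqrt a := Real.sqrt_le_sqrt ha
  have hsmb : Real.sqrt m ≤ Real.sqrt b := Real.sqrt_le_sqrt hb
  have hA : Real.sqrt a ^ 2 = a := Real.sq_sqrt ha0.le
  have hB : Real.sqrt b ^ 2 = b := Real.sq_sqrt hb0.le
  have hmm : Real.sqrt m * Real.sqrt m = m := Real.mul_self_sqrt hm.le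
  rw [aux_rpow_neg_half ha0, aux_rpow_neg_half hb0]
  have key : (Real.sqrt a)⁻¹ - (Real.sqrt b)⁻¹
      = (b - a) / (Real.sqrt a * Real.sqrt b * (Real.sqrt a + Real.sqrt b)) := by
    rw [eq_div_iff (by positivity)]
    field_simp
    linear_combination hB - hA
  rw [key, abs_div, abs_sub_comm a b]
  have hden : 2 * m * Real.sqrt m ≤ |Real.sqrt a * Real.sqrt b * (Real.sqrt a + Real.sqrt b)| := by
    rw [abs_of_pos (by positivity)]
    nlinarith
  exact div_le_div_of_nonneg_left (abs_nonneg _) (by positivity) hden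

/-- asymptotics of the integral `𝓕(λ) = ∫_λ^{λ₀} μ^{−α/2−1}(2β/(2−α)+C₀μ^{2−α})^{−1/2} dμ`:
`|𝓕(λ) − (2/α)(2β/(2−α))^{−1/2} λ^{−α/2}| ≤ C (λ^{−α/4} + λ^{2−3α/2})` on `(0, λ₀]`. -/
theorem F_asymptotics (α β C₀ lam₀ : ℝ) (hα0 : 0 < α) (hα2 : α < 2) (hβ : 0 < β)
    (hlam₀ : 0 < lam₀)
    (hpos : ∀ μ ∈ Set.Ioc (0 : ℝ) lam₀, 0 < 2 * β / (2 - α) + C₀ * μ ^ (2 - α)) :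
    ∃ C : ℝ, 0 < C ∧ ∀ lam ∈ Set.Ioc (0 : ℝ) lam₀,
      |(∫ μ in lam..lam₀, μ ^ (-α / 2 - 1) * (2 * β / (2 - α) + C₀ * μ ^ (2 - α)) ^ (-(1:ℝ) / 2)) -
          (2 / α) * (2 * β / (2 - α)) ^ (-(1:ℝ) / 2) * lam ^ (-α / 2)|
        ≤ C * (lam ^ (-α / 4) + lam ^ (2 - 3 * α / 2)) := by
  have h2α : 0 < 2 - α := by linarith
  set A := 2 * β / (2 - α) with hAdef
  have hA : 0 < A := div_pos (by linarith) h2α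
  clear_value A
  set m := min A (A + C₀ * lam₀ ^ (2 - α)) with hmdef
  have hm : 0 < m := lt_min hA (hpos lam₀ ⟨hlam₀, le_refl _⟩)
  clear_value m
  have hlb : ∀ μ : ℝ, 0 < μ → μ ≤ lam₀ → m ≤ A + C₀ * μ ^ (2 - α) := by
    intro μ hμ hμle
    rcases le_or_gt 0 C₀ with hC | hC
    · refine le_trans (show m ≤ A by rw [hmdef]; exact min_le_left _ _) ?_
      nlinarith [Real.rpow_nonneg hμ.le (2 - α), mul_nonneg hC (Real.rpow_nonneg hμ.le (2 - α))]
    · refine le_trans (show m ≤ A + C₀ * lam₀ ^ (2 - α) by rw [hmdef]; exact min_le_right _ _) ?_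
      have h1 : μ ^ (2 - α) ≤ lam₀ ^ (2 - α) := Real.rpow_le_rpow hμ.le hμle h2α.le
      nlinarith
  set sm := Real.sqrt m with hsmdef
  have hsm : 0 < sm := Real.sqrt_pos.mpr hm
  clear_value sm
  set K := |C₀| / (2 * m * sm) with hKdef
  have hK0 : 0 ≤ K := by positivity
  clear_value K
  set e := min (-α / 4) (2 - 3 * α / 2) with hedef
  have he : e < 0 := lt_of_le_of_lt (min_le_left _ _) (by linarith)
  have helq : e ≤ 2 - 3 * α / 2 := min_le_right _ _
  clear_value e
  set q := 2 - 3 * α / 2 - e with hqdef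
  have hq : 0 ≤ q := sub_nonneg.mpr helq
  clear_value q
  set M := max 1 (lam₀ ^ q) with hMdef
  have hM0 : (0:ℝ) < M := lt_of_lt_of_le one_pos (le_max_left _ _)
  clear_value M
  set c₂ := (2 / α) * A ^ (-(1:ℝ)/2) * lam₀ ^ (-α / 2) with hc₂def
  have hc₂ : 0 ≤ c₂ := by positivity
  clear_value c₂
  refine ⟨K * M / (-e) + c₂ * lam₀ ^ (α / 4) + 1, ?_, ?_⟩
  · have h1 : 0 ≤ K * M / (-e) := div_nonneg (mul_nonneg hK0 hM0.le) (by linarith)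
    have h2 : 0 ≤ c₂ * lam₀ ^ (α / 4) := mul_nonneg hc₂ (Real.rpow_nonneg hlam₀.le _)
    linarith
  intro lam hlamm
  obtain ⟨hlam, hlle⟩ := hlamm
  set f : ℝ → ℝ := fun μ => μ ^ (-α / 2 - 1) * (A + C₀ * μ ^ (2 - α)) ^ (-(1:ℝ)/2) with hfdef
  set h : ℝ → ℝ := fun μ => μ ^ (-α / 2 - 1) * A ^ (-(1:ℝ)/2) with hhdef
  have hzero : (0:ℝ) ∉ Set.uIcc lam lam₀ := by
    rw [Set.uIcc_of_le hlle]
    intro hmem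
    exact absurd hmem.1 (not_le.mpr hlam)
  have hcont_pow : ∀ r : ℝ, ContinuousOn (fun μ : ℝ => μ ^ r) (Set.Icc lam lam₀) := by
    intro r
    exact continuousOn_id.rpow_const fun x hx => Or.inl (ne_of_gt (lt_of_lt_of_le hlam hx.1))
  have hcont_f : ContinuousOn f (Set.Icc lam lam₀) := by
    apply (hcont_pow _).mul
    apply ContinuousOn.rpow_const
    · exact continuousOn_const.add (continuousOn_const.mul ((continuousOn_id.rpow_const
        fun x hx => Or.inr h2α.le)))
    · intro x hx
      exact Or.inl (ne_of_gt (lt_of_lt_of_le hm (hlb x (lt_of_lt_of_le hlam hx.1) hx.2)))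
  have hcont_h : ContinuousOn h (Set.Icc lam lam₀) := (hcont_pow _).mul continuousOn_const
  have hint_f : IntervalIntegrable f volume lam lam₀ := hcont_f.intervalIntegrable_of_Icc hlle
  have hint_h : IntervalIntegrable h volume lam lam₀ := hcont_h.intervalIntegrable_of_Icc hlle
  have hint_pow : IntervalIntegrable (fun μ : ℝ => K * M * μ ^ (e - 1)) volume lam lam₀ :=
    (continuousOn_const.mul (hcont_pow _)).intervalIntegrable_of_Icc hlle
  have I1 : ∫ μ in lam..lam₀, μ ^ (-α / 2 - 1)
      = (lam₀ ^ (-α / 2) - lam ^ (-α / 2)) / (-α / 2) := by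
    rw [integral_rpow (Or.inr ⟨by intro hcon; rw [show -α/2-1 = -1 ↔ α = 0 by constructor <;> intro <;> linarith] at hcon; exact hα0.ne' hcon, hzero⟩)]
    rw [show -α / 2 - 1 + 1 = -α / 2 by ring]
  have I2 : ∫ μ in lam..lam₀, h μ
      = ((lam₀ ^ (-α / 2) - lam ^ (-α / 2)) / (-α / 2)) * A ^ (-(1:ℝ)/2) := by
    simp only [hhdef]
    rw [intervalIntegral.integral_mul_const, I1]
  have split : (∫ μ in lam..lam₀, f μ) - (2 / α) * A ^ (-(1:ℝ)/2) * lam ^ (-α / 2)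
      = (∫ μ in lam..lam₀, (f μ - h μ)) - c₂ := by
    rw [intervalIntegral.integral_sub hint_f hint_h, I2, hc₂def]
    have hdiv : (lam₀ ^ (-α / 2) - lam ^ (-α / 2)) / (-α / 2)
        = (2 / α) * (lam ^ (-α / 2) - lam₀ ^ (-α / 2)) := by
      rw [div_eq_iff (by simpa using hα0.ne' : -α / 2 ≠ 0)]
      field_simp
      ring
    rw [hdiv]
    ring
  have hbnd : ∀ μ ∈ Set.Icc lam lam₀, |f μ - h μ| ≤ K * M * μ ^ (e - 1) := by
    intro μ hμ
    have hμ0 : 0 < μ := lt_of_lt_of_le hlam hμ.1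
    have hd : |(A + C₀ * μ ^ (2 - α)) ^ (-(1:ℝ)/2) - A ^ (-(1:ℝ)/2)|
        ≤ |C₀| * μ ^ (2 - α) / (2 * m * sm) := by
      have h1 := aux_diff m (A + C₀ * μ ^ (2 - α)) A hm (hlb μ hμ0 hμ.2)
        (show m ≤ A by rw [hmdef]; exact min_le_left _ _)
      have h2 : |A + C₀ * μ ^ (2 - α) - A| = |C₀| * μ ^ (2 - α) := by
        rw [show A + C₀ * μ ^ (2 - α) - A = C₀ * μ ^ (2 - α) by ring, abs_mul,
          abs_of_nonneg (Real.rpow_nonneg hμ0.le _)]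
      rw [h2] at h1
      rw [← hsmdef] at h1
      exact h1
    have heq : |f μ - h μ|
        = μ ^ (-α / 2 - 1) * |(A + C₀ * μ ^ (2 - α)) ^ (-(1:ℝ)/2) - A ^ (-(1:ℝ)/2)| := by
      simp only [hfdef, hhdef]
      rw [← mul_sub, abs_mul, abs_of_nonneg (Real.rpow_nonneg hμ0.le _)]
    rw [heq]
    have step1 : μ ^ (-α / 2 - 1) * |(A + C₀ * μ ^ (2 - α)) ^ (-(1:ℝ)/2) - A ^ (-(1:ℝ)/2)|
        ≤ μ ^ (-α / 2 - 1) * (|C₀| * μ ^ (2 - α) / (2 * m * sm)) :=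
      mul_le_mul_of_nonneg_left hd (Real.rpow_nonneg hμ0.le _)
    have step2 : μ ^ (-α / 2 - 1) * (|C₀| * μ ^ (2 - α) / (2 * m * sm))
        = K * μ ^ (1 - 3 * α / 2) := by
      rw [hKdef]
      rw [show μ ^ (1 - 3 * α / 2) = μ ^ (-α / 2 - 1) * μ ^ (2 - α) by
        rw [← Real.rpow_add hμ0]; ring_nf]
      ring
    have step3 : μ ^ (1 - 3 * α / 2) ≤ M * μ ^ (e - 1) := by
      have hmul : μ ^ (1 - 3 * α / 2) = μ ^ q * μ ^ (e - 1) := by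
        rw [← Real.rpow_add hμ0, hqdef]; ring_nf
      rw [hmul]
      have hqb : μ ^ q ≤ M := by
        rcases le_or_gt μ 1 with h1 | h1
        · exact le_trans (Real.rpow_le_one hμ0.le h1 hq)
            (show (1:ℝ) ≤ M by rw [hMdef]; exact le_max_left _ _)
        · exact le_trans (Real.rpow_le_rpow hμ0.le hμ.2 hq)
            (show lam₀ ^ q ≤ M by rw [hMdef]; exact le_max_right _ _)
      exact mul_le_mul_of_nonneg_right hqb (Real.rpow_nonneg hμ0.le _)
    calc μ ^ (-α / 2 - 1) * |(A + C₀ * μ ^ (2 - α)) ^ (-(1:ℝ)/2) - A ^ (-(1:ℝ)/2)|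
        ≤ K * μ ^ (1 - 3 * α / 2) := by rw [← step2]; exact step1
      _ ≤ K * (M * μ ^ (e - 1)) := mul_le_mul_of_nonneg_left step3 hK0
      _ = K * M * μ ^ (e - 1) := by ring
  have habs : |∫ μ in lam..lam₀, (f μ - h μ)| ≤ K * M * (lam ^ e / (-e)) := by
    have t1 : |∫ μ in lam..lam₀, (f μ - h μ)| ≤ ∫ μ in lam..lam₀, |f μ - h μ| := by
      have := intervalIntegral.norm_integral_le_integral_norm
        (f := fun μ => f μ - h μ) (μ := volume) hlle
      simpa [Real.norm_eq_abs] using this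
    have t2 : (∫ μ in lam..lam₀, |f μ - h μ|) ≤ ∫ μ in lam..lam₀, K * M * μ ^ (e - 1) :=
      integral_mono_on hlle (hint_f.sub hint_h).abs hint_pow hbnd
    have t3 : (∫ μ in lam..lam₀, K * M * μ ^ (e - 1)) = K * M * ((lam₀ ^ e - lam ^ e) / e) := by
      rw [intervalIntegral.integral_const_mul,
        integral_rpow (Or.inr ⟨by intro hcon; rw [show e - 1 = -1 ↔ e = 0 by constructor <;> intro <;> linarith] at hcon; exact (ne_of_lt he) hcon, hzero⟩),
        show e - 1 + 1 = e by ring]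
    have t4 : (lam₀ ^ e - lam ^ e) / e ≤ lam ^ e / (-e) := by
      rw [show (lam₀ ^ e - lam ^ e) / e = (lam ^ e - lam₀ ^ e) / (-e) by
        rw [div_eq_div_iff (ne_of_lt he) (by linarith)]; ring]
      apply div_le_div_of_nonneg_right ?_ (by linarith)
      · nlinarith [Real.rpow_nonneg hlam₀.le e]
    calc |∫ μ in lam..lam₀, (f μ - h μ)| ≤ ∫ μ in lam..lam₀, |f μ - h μ| := t1
      _ ≤ K * M * ((lam₀ ^ e - lam ^ e) / e) := by rw [← t3]; exact t2
      _ ≤ K * M * (lam ^ e / (-e)) :=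
        mul_le_mul_of_nonneg_left t4 (mul_nonneg hK0 hM0.le)
  have hle2 : lam ^ e ≤ lam ^ (-α / 4) + lam ^ (2 - 3 * α / 2) := by
    rcases min_cases (-α / 4) (2 - 3 * α / 2) with ⟨h1, _⟩ | ⟨h1, _⟩ <;>
      rw [hedef, h1]
    · exact le_add_of_nonneg_right (Real.rpow_nonneg hlam.le _)
    · exact le_add_of_nonneg_left (Real.rpow_nonneg hlam.le _)
  have hS0 : (0:ℝ) < lam ^ (-α / 4) + lam ^ (2 - 3 * α / 2) := by positivity
  have hc2b : c₂ ≤ (c₂ * lam₀ ^ (α / 4)) * lam ^ (-α / 4) := by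
    have h1 : lam₀ ^ (-α / 4) ≤ lam ^ (-α / 4) :=
      Real.rpow_le_rpow_of_nonpos hlam hlle (by linarith)
    have h2 : lam₀ ^ (α / 4) * lam₀ ^ (-α / 4) = 1 := by
      rw [← Real.rpow_add hlam₀, show α / 4 + -α / 4 = 0 by ring, Real.rpow_zero]
    have h3 : (1:ℝ) ≤ lam₀ ^ (α / 4) * lam ^ (-α / 4) := by
      calc (1:ℝ) = lam₀ ^ (α / 4) * lam₀ ^ (-α / 4) := h2.symm
        _ ≤ lam₀ ^ (α / 4) * lam ^ (-α / 4) :=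
          mul_le_mul_of_nonneg_left h1 (Real.rpow_nonneg hlam₀.le _)
    rw [mul_assoc]
    exact le_mul_of_one_le_right hc₂ h3
  have hmain : |(∫ μ in lam..lam₀, f μ) - (2 / α) * A ^ (-(1:ℝ)/2) * lam ^ (-α / 2)|
      ≤ K * M * (lam ^ e / (-e)) + c₂ := by
    rw [split]
    calc |(∫ μ in lam..lam₀, (f μ - h μ)) - c₂|
        ≤ |∫ μ in lam..lam₀, (f μ - h μ)| + |c₂| := abs_sub _ _
      _ ≤ K * M * (lam ^ e / (-e)) + c₂ := by rw [abs_of_nonneg hc₂]; exact add_le_add habs (le_refl _)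
  have hfinal : K * M * (lam ^ e / (-e)) + c₂
      ≤ (K * M / (-e) + c₂ * lam₀ ^ (α / 4) + 1) * (lam ^ (-α / 4) + lam ^ (2 - 3 * α / 2)) := by
    have hKMe : 0 ≤ K * M / (-e) := div_nonneg (mul_nonneg hK0 hM0.le) (by linarith)
    have e1 : K * M * (lam ^ e / (-e)) = (K * M / (-e)) * lam ^ e := by ring
    have e2 : (K * M / (-e)) * lam ^ e
        ≤ (K * M / (-e)) * (lam ^ (-α / 4) + lam ^ (2 - 3 * α / 2)) :=
      mul_le_mul_of_nonneg_left hle2 hKMe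
    have e3 : (c₂ * lam₀ ^ (α / 4)) * lam ^ (-α / 4)
        ≤ (c₂ * lam₀ ^ (α / 4)) * (lam ^ (-α / 4) + lam ^ (2 - 3 * α / 2)) :=
      mul_le_mul_of_nonneg_left (le_add_of_nonneg_right (Real.rpow_nonneg hlam.le _))
        (mul_nonneg hc₂ (Real.rpow_nonneg hlam₀.le _))
    have expand : (K * M / (-e) + c₂ * lam₀ ^ (α / 4) + 1) * (lam ^ (-α / 4) + lam ^ (2 - 3 * α / 2))
        = (K * M / (-e)) * (lam ^ (-α / 4) + lam ^ (2 - 3 * α / 2))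
          + (c₂ * lam₀ ^ (α / 4)) * (lam ^ (-α / 4) + lam ^ (2 - 3 * α / 2))
          + (lam ^ (-α / 4) + lam ^ (2 - 3 * α / 2)) := by ring
    rw [expand]
    linarith [e1, e2, e3, hc2b, hS0]
  exact le_trans hmain hfinal
end

section
/- Let N ≥ 1, let q > 0, and let w : ℝ^N → ℂ be a Schwartz function. Then Re ∫_{ℝ^N} |w(x)|^q w(x) · conj((Λw)(x)) dx = (N q / (2(q+2))) ∫_{ℝ^N} |w(x)|^{q+2} dx, i.e. (|w|^q w, Λw)₂ = (Nq/(2(q+2))) ‖w‖_{q+2}^{q+2}. -/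
open MeasureTheory Filter Complex

lemma aux_hasDerivAt (q : ℝ) (hq : 0 < q) {E : Type*} [NormedAddCommGroup E] [NormedSpace ℝ E]
    (w : E → ℂ) (hw : Differentiable ℝ w) (x : E) (t : ℝ) :
    HasDerivAt (fun s : ℝ => ‖w (s • x)‖ ^ (q + 2))
      ((q + 2) * ‖w (t • x)‖ ^ q *
        ((starRingEnd ℂ) (w (t • x)) * fderiv ℝ w (t • x) x).re) t := by
  have hsx : HasDerivAt (fun s : ℝ => s • x) x t := by
    simpa using (hasDerivAt_id t).smul_const x
  set u' : ℂ := fderiv ℝ w (t • x) x with hu'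
  have hu : HasDerivAt (fun s : ℝ => w (s • x)) u' t := by
    simpa [Function.comp_def] using
      ((hw (t • x)).hasFDerivAt).comp_hasDerivAt t hsx
  have hre : HasDerivAt (fun s : ℝ => (w (s • x)).re) u'.re t := by
    simpa [Function.comp_def] using Complex.reCLM.hasFDerivAt.comp_hasDerivAt t hu
  have him : HasDerivAt (fun s : ℝ => (w (s • x)).im) u'.im t := by
    simpa [Function.comp_def] using Complex.imCLM.hasFDerivAt.comp_hasDerivAt t hu
  have hn : HasDerivAt (fun s : ℝ => (w (s • x)).re ^ 2 + (w (s • x)).im ^ 2)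
      (2 * (w (t • x)).re ^ 1 * u'.re + 2 * (w (t • x)).im ^ 1 * u'.im) t :=
    (hre.pow 2).add (him.pow 2)
  have hp : HasDerivAt (fun r : ℝ => r ^ ((q + 2) / 2))
      (((q + 2) / 2) * ((w (t • x)).re ^ 2 + (w (t • x)).im ^ 2) ^ ((q + 2) / 2 - 1))
      ((w (t • x)).re ^ 2 + (w (t • x)).im ^ 2) :=
    Real.hasDerivAt_rpow_const (Or.inr (by linarith))
  have key := hp.comp t hn
  have hnsq : ∀ s : ℝ, (w (s • x)).re ^ 2 + (w (s • x)).im ^ 2 = ‖w (s • x)‖ ^ (2 : ℕ) := by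
    intro s
    rw [Complex.sq_norm, Complex.normSq_apply]; ring
  have hfun : ((fun r : ℝ => r ^ ((q + 2) / 2)) ∘
      fun s : ℝ => (w (s • x)).re ^ 2 + (w (s • x)).im ^ 2) =
      fun s : ℝ => ‖w (s • x)‖ ^ (q + 2) := by
    funext s
    simp only [Function.comp_apply, hnsq s]
    rw [← Real.rpow_natCast (‖w (s • x)‖) 2, ← Real.rpow_mul (norm_nonneg _)]
    congr 1
    push_cast
    ring
  rw [hfun] at key
  refine key.congr_deriv ?_
  have hmr : ((starRingEnd ℂ) (w (t • x)) * u').re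
      = (w (t • x)).re * u'.re + (w (t • x)).im * u'.im := by
    simp [Complex.mul_re]
  rw [hnsq t, ← Real.rpow_natCast (‖w (t • x)‖) 2, ← Real.rpow_mul (norm_nonneg _), hmr]
  push_cast
  rw [show (2 : ℝ) * ((q + 2) / 2 - 1) = q by ring]
  ring


set_option maxHeartbeats 1000000 in
/-- for Schwartz `w` and `q > 0`,
`(|w|^q w, Λw)₂ = (Nq/(2(q+2))) ‖w‖_{q+2}^{q+2}`, where `Λw = (N/2)w + x·∇w`. -/
theorem power_inner_scaling (N : ℕ) (hN : 1 ≤ N) (q : ℝ) (hq : 0 < q)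
    (w : SchwartzMap (EuclideanSpace ℝ (Fin N)) ℂ) :
    (∫ x, ‖w x‖ ^ q *
        (w x * (starRingEnd ℂ) (((N : ℂ) / 2) * w x + fderiv ℝ (⇑w) x x)).re) =
      (N * q / (2 * (q + 2))) * ∫ x, ‖w x‖ ^ (q + 2) := by
  set E := EuclideanSpace ℝ (Fin N)
  -- seminorm bound
  set S : ℝ := 2 ^ (N + 2) *
    ((Finset.Iic ((N + 2 : ℕ), (1 : ℕ))).sup fun m => SchwartzMap.seminorm ℝ m.1 m.2) w with hS
  have hS0 : 0 ≤ S := by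
    apply mul_nonneg (by positivity)
    exact apply_nonneg _ _
  have hwb : ∀ y : E, ‖w y‖ ≤ S := by
    intro y
    have := SchwartzMap.one_add_le_sup_seminorm_apply (𝕜 := ℝ) (m := ((N + 2 : ℕ), (1 : ℕ)))
      (k := 0) (n := 0) (by simp) (by simp) w y
    simpa [norm_iteratedFDeriv_zero] using this
  have hdb : ∀ y : E, (1 + ‖y‖) ^ (N + 2) * ‖fderiv ℝ (⇑w) y‖ ≤ S := by
    intro y
    have := SchwartzMap.one_add_le_sup_seminorm_apply (𝕜 := ℝ) (m := ((N + 2 : ℕ), (1 : ℕ)))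
      (k := N + 2) (n := 1) le_rfl le_rfl w y
    have hnorm : ‖fderiv ℝ (⇑w) y‖ = ‖iteratedFDeriv ℝ 1 (⇑w) y‖ := by
      rw [← norm_iteratedFDeriv_fderiv (n := 0), norm_iteratedFDeriv_zero]
    rw [hnorm]
    exact this
  set F : ℝ → E → ℝ := fun t x => ‖w (t • x)‖ ^ (q + 2) with hF
  set F' : ℝ → E → ℝ := fun t x =>
    (q + 2) * ‖w (t • x)‖ ^ q *
      ((starRingEnd ℂ) (w (t • x)) * fderiv ℝ (⇑w) (t • x) x).re with hF'
  set bound : E → ℝ := fun x =>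
    ((q + 2) * S ^ q * S * (S * 2 ^ (N + 2))) * (‖x‖ / (1 + ‖x‖) ^ (N + 2)) with hbound
  have hcont_fda : Continuous fun x : E => fderiv ℝ (⇑w) x x := by
    exact ((w.smooth ⊤).continuous_fderiv_apply (by simp)).comp
      (continuous_id.prodMk continuous_id)
  have hcontF : ∀ t : ℝ, Continuous (F t) := by
    intro t
    exact ((w.continuous.comp (continuous_const_smul t)).norm).rpow_const
      (fun x => Or.inr (by positivity))
  have hmeasF : ∀ᶠ t in nhds (1 : ℝ), AEStronglyMeasurable (F t) volume :=
    Eventually.of_forall fun t => (hcontF t).aestronglyMeasurable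
  have hintF1 : Integrable (F 1) volume := by
    have hcmp : ∀ x : E, ‖F 1 x‖ ≤ ‖S ^ (q + 1) * ‖w x‖‖ := by
      intro x
      have h1 : F 1 x = ‖w x‖ ^ (q + 1) * ‖w x‖ := by
        simp only [hF, one_smul]
        rw [show (q + 2) = (q + 1) + 1 by ring,
          Real.rpow_add' (norm_nonneg _) (by positivity)]
        simp [Real.rpow_one]
      rw [Real.norm_of_nonneg (by simp only [hF]; positivity), h1]
      have : ‖w x‖ ^ (q + 1) ≤ S ^ (q + 1) :=
        Real.rpow_le_rpow (norm_nonneg _) (hwb x) (by positivity)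
      calc ‖w x‖ ^ (q + 1) * ‖w x‖ ≤ S ^ (q + 1) * ‖w x‖ :=
            mul_le_mul_of_nonneg_right this (norm_nonneg _)
        _ ≤ ‖S ^ (q + 1) * ‖w x‖‖ := le_abs_self _
    exact ((w.integrable.norm.const_mul (S ^ (q + 1))).mono
      (hcontF 1).aestronglyMeasurable (Eventually.of_forall hcmp))
  have hmeasF'1 : AEStronglyMeasurable (F' 1) volume := by
    apply Continuous.aestronglyMeasurable
    apply Continuous.mul
    · exact continuous_const.mul
        (((w.continuous.comp (continuous_const_smul (1:ℝ))).norm).rpow_const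
          (fun x => Or.inr hq.le))
    · exact Complex.continuous_re.comp
        ((Complex.continuous_conj.comp (w.continuous.comp (continuous_const_smul (1:ℝ)))).mul
          (by
            have : Continuous fun x : E => fderiv ℝ (⇑w) ((1:ℝ) • x) x := by
              exact ((w.smooth ⊤).continuous_fderiv_apply (by simp)).comp
                ((continuous_const_smul (1:ℝ)).prodMk continuous_id)
            exact this))
  have hboundF' : ∀ᵐ x : E ∂volume, ∀ t ∈ Metric.ball (1:ℝ) (1/2), ‖F' t x‖ ≤ bound x := by
    refine Eventually.of_forall fun x => fun t ht => ?_
    have ht2 : |t - 1| < 1/2 := by simpa [Real.dist_eq] using ht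
    have htpos : (1:ℝ)/2 ≤ t := by cases abs_lt.mp ht2; linarith
    have ht0 : 0 < t := by linarith
    have hnorm_smul : ‖t • x‖ = t * ‖x‖ := by
      rw [norm_smul, Real.norm_of_nonneg ht0.le]
    have hhalf : (1 + ‖x‖) / 2 ≤ 1 + ‖t • x‖ := by
      rw [hnorm_smul]
      nlinarith [norm_nonneg x]
    have hpow : (1 + ‖x‖) ^ (N + 2) / 2 ^ (N + 2) ≤ (1 + ‖t • x‖) ^ (N + 2) := by
      rw [← div_pow]
      exact pow_le_pow_left₀ (by positivity) hhalf _
    have hfd : ‖fderiv ℝ (⇑w) (t • x)‖ ≤ S * 2 ^ (N + 2) / (1 + ‖x‖) ^ (N + 2) := by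
      have h1 := hdb (t • x)
      have h2 : (1 + ‖x‖) ^ (N + 2) / 2 ^ (N + 2) * ‖fderiv ℝ (⇑w) (t • x)‖ ≤ S := by
        refine le_trans (mul_le_mul_of_nonneg_right hpow (norm_nonneg _)) h1
      have hx0 : (0:ℝ) < (1 + ‖x‖) ^ (N + 2) := by positivity
      rw [div_mul_eq_mul_div, div_le_iff₀ (by positivity)] at h2
      rw [le_div_iff₀ hx0]
      calc ‖fderiv ℝ (⇑w) (t • x)‖ * (1 + ‖x‖) ^ (N + 2)
          = (1 + ‖x‖) ^ (N + 2) * ‖fderiv ℝ (⇑w) (t • x)‖ := by ring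
        _ ≤ S * 2 ^ (N + 2) := h2
    have hre : |((starRingEnd ℂ) (w (t • x)) * fderiv ℝ (⇑w) (t • x) x).re|
        ≤ ‖w (t • x)‖ * (‖fderiv ℝ (⇑w) (t • x)‖ * ‖x‖) := by
      calc |((starRingEnd ℂ) (w (t • x)) * fderiv ℝ (⇑w) (t • x) x).re|
          ≤ ‖(starRingEnd ℂ) (w (t • x)) * fderiv ℝ (⇑w) (t • x) x‖ := by
            exact Complex.abs_re_le_norm _
        _ = ‖w (t • x)‖ * ‖fderiv ℝ (⇑w) (t • x) x‖ := by
            rw [norm_mul, RCLike.norm_conj]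
        _ ≤ ‖w (t • x)‖ * (‖fderiv ℝ (⇑w) (t • x)‖ * ‖x‖) :=
            mul_le_mul_of_nonneg_left ((fderiv ℝ (⇑w) (t • x)).le_opNorm x) (norm_nonneg _)
    have hq2 : (0:ℝ) ≤ q + 2 := by linarith
    have hrq : ‖w (t • x)‖ ^ q ≤ S ^ q :=
      Real.rpow_le_rpow (norm_nonneg _) (hwb _) hq.le
    rw [Real.norm_eq_abs, hF']
    simp only
    rw [abs_mul, abs_mul, _root_.abs_of_nonneg hq2, _root_.abs_of_nonneg (Real.rpow_nonneg (norm_nonneg _) q)]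
    calc (q + 2) * ‖w (t • x)‖ ^ q * |((starRingEnd ℂ) (w (t • x)) * fderiv ℝ (⇑w) (t • x) x).re|
        ≤ (q + 2) * S ^ q * (‖w (t • x)‖ * (‖fderiv ℝ (⇑w) (t • x)‖ * ‖x‖)) := by
          apply mul_le_mul
          · exact mul_le_mul_of_nonneg_left hrq hq2
          · exact hre
          · exact abs_nonneg _
          · positivity
      _ ≤ (q + 2) * S ^ q * (S * ((S * 2 ^ (N + 2) / (1 + ‖x‖) ^ (N + 2)) * ‖x‖)) := by
          apply mul_le_mul_of_nonneg_left _ (by positivity)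
          apply mul_le_mul (hwb _) (mul_le_mul_of_nonneg_right hfd (norm_nonneg _))
            (by positivity) hS0
      _ = bound x := by rw [hbound]; ring
  have hboundint : Integrable bound volume := by
    have hrN : ((Module.finrank ℝ E : ℝ)) < (N:ℝ) + 1 := by
      rw [show Module.finrank ℝ E = N from finrank_euclideanSpace_fin]
      linarith
    have hint : Integrable (fun x : E => (1 + ‖x‖) ^ (-((N:ℝ) + 1))) volume :=
      integrable_one_add_norm hrN
    apply (hint.const_mul ((q + 2) * S ^ q * S * (S * 2 ^ (N + 2)))).mono
    · apply Continuous.aestronglyMeasurable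
      apply continuous_const.mul
      apply Continuous.div continuous_norm ((continuous_const.add continuous_norm).pow _)
      intro x; exact pow_ne_zero _ (by show (1:ℝ) + ‖x‖ ≠ 0; positivity)
    · refine Eventually.of_forall fun x => ?_
      have h1x : (0:ℝ) < 1 + ‖x‖ := by positivity
      have key : ‖x‖ / (1 + ‖x‖) ^ (N + 2) ≤ (1 + ‖x‖) ^ (-((N:ℝ) + 1)) := by
        rw [Real.rpow_neg h1x.le, show ((N:ℝ) + 1) = ((N + 1 : ℕ) : ℝ) by push_cast; ring,
          Real.rpow_natCast]
        rw [div_le_iff₀ (by positivity), pow_succ (1 + ‖x‖) (N + 1)]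
        calc ‖x‖ = ((1 + ‖x‖) ^ (N+1))⁻¹ * ((1 + ‖x‖) ^ (N+1)) * ‖x‖ := by
              rw [inv_mul_cancel₀ (by positivity)]; ring
          _ ≤ ((1 + ‖x‖) ^ (N+1))⁻¹ * ((1 + ‖x‖) ^ (N + 1) * (1 + ‖x‖)) := by
              rw [mul_assoc]
              apply mul_le_mul_of_nonneg_left _ (by positivity)
              apply mul_le_mul_of_nonneg_left _ (by positivity)
              linarith
      rw [Real.norm_eq_abs, Real.norm_eq_abs, hbound]
      simp only
      rw [abs_mul, _root_.abs_of_nonneg (by positivity : (0:ℝ) ≤ (q + 2) * S ^ q * S * (S * 2 ^ (N + 2))),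
        _root_.abs_of_nonneg (by positivity : (0:ℝ) ≤ ‖x‖ / (1 + ‖x‖) ^ (N + 2)),
        _root_.abs_of_nonneg (by positivity : (0:ℝ) ≤ ((q + 2) * S ^ q * S * (S * 2 ^ (N + 2))) * (1 + ‖x‖) ^ (-((N:ℝ) + 1)))]
      exact mul_le_mul_of_nonneg_left key (by positivity)
  have hderiv : ∀ᵐ x : E ∂volume, ∀ t ∈ Metric.ball (1:ℝ) (1/2),
      HasDerivAt (fun s => F s x) (F' t x) t :=
    Eventually.of_forall fun x t _ =>
      aux_hasDerivAt q hq (⇑w) w.differentiable x t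
  obtain ⟨hintF'1, hHD⟩ :=
    hasDerivAt_integral_of_dominated_loc_of_deriv_le (F := F) (F' := F') (x₀ := (1:ℝ))
      (bound := bound) (Metric.ball_mem_nhds _ (by norm_num : (0:ℝ) < 1/2)) hmeasF hintF1 hmeasF'1 hboundF' hboundint hderiv
  -- scaling identity
  set I : ℝ := ∫ x : E, ‖w x‖ ^ (q + 2) with hI
  have hg : ∀ t : ℝ, (∫ x : E, F t x) = |(t ^ N)⁻¹| * I := by
    intro t
    have := MeasureTheory.Measure.integral_comp_smul (μ := (volume : Measure E))
      (fun y : E => ‖w y‖ ^ (q + 2)) t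
    rw [show Module.finrank ℝ E = N from finrank_euclideanSpace_fin] at this
    simpa [smul_eq_mul] using this
  have hscale : HasDerivAt (fun t : ℝ => ∫ x : E, F t x) (-(N:ℝ) * I) 1 := by
    have hpow : HasDerivAt (fun t : ℝ => t ^ N) ((N:ℝ) * 1 ^ (N - 1)) 1 := hasDerivAt_pow N 1
    have hinv : HasDerivAt (fun t : ℝ => (t ^ N)⁻¹)
        (-((N:ℝ) * 1 ^ (N - 1)) / ((1:ℝ) ^ N) ^ 2) 1 := hpow.inv (by norm_num)
    have h1 : HasDerivAt (fun t : ℝ => (t ^ N)⁻¹ * I) (-(N:ℝ) * I) 1 := by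
      have := hinv.mul_const I
      simpa using this
    apply h1.congr_of_eventuallyEq
    filter_upwards [Ioi_mem_nhds (by norm_num : (0:ℝ) < 1)] with t ht
    rw [hg t, _root_.abs_of_nonneg (inv_nonneg.mpr (pow_nonneg (le_of_lt (Set.mem_Ioi.mp ht)) _))]
  have hkey : (∫ x : E, F' 1 x) = -(N:ℝ) * I := hHD.unique hscale
  -- extract integrability and value for G
  set G : E → ℝ := fun x => ‖w x‖ ^ q * ((starRingEnd ℂ) (w x) * fderiv ℝ (⇑w) x x).re with hG
  have hF'1G : F' 1 = fun x => (q + 2) * G x := by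
    funext x
    simp only [hF', hG, one_smul]
    ring
  have hGint : Integrable G volume := by
    have := hintF'1
    rw [hF'1G] at this
    have h2 := this.const_mul (q + 2)⁻¹
    have heq : (fun x : E => (q + 2)⁻¹ * ((q + 2) * G x)) = G := by
      funext x
      field_simp
    rwa [heq] at h2
  have hGval : (∫ x : E, G x) = -(N:ℝ) * I / (q + 2) := by
    rw [hF'1G] at hkey
    rw [integral_const_mul] at hkey
    field_simp at hkey ⊢
    linarith
  have hI1int : Integrable (fun x : E => ‖w x‖ ^ (q + 2)) volume := by
    have := hintF1
    simpa [hF, one_smul] using this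
  -- pointwise identity
  have hpt : (fun x : E => ‖w x‖ ^ q *
        (w x * (starRingEnd ℂ) (((N : ℂ) / 2) * w x + fderiv ℝ (⇑w) x x)).re)
      = fun x : E => ((N:ℝ)/2) * ‖w x‖ ^ (q + 2) + G x := by
    funext x
    set z := w x with hz
    set v := fderiv ℝ (⇑w) x x with hv
    have hsplit : ‖z‖ ^ (q + 2) = ‖z‖ ^ q * ‖z‖ ^ (2:ℕ) := by
      rw [Real.rpow_add' (norm_nonneg _) (by positivity), ← Real.rpow_natCast (‖z‖) 2]
      norm_num
    have hNc : ((N : ℂ) / 2) = (((N:ℝ)/2 : ℝ) : ℂ) := by push_cast; ring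
    have h1 : (z * (starRingEnd ℂ) (((N : ℂ) / 2) * z)).re = ((N:ℝ)/2) * ‖z‖ ^ (2:ℕ) := by
      rw [hNc, map_mul, Complex.conj_ofReal,
        show z * ((((N:ℝ)/2 : ℝ) : ℂ) * (starRingEnd ℂ) z)
          = (((N:ℝ)/2 : ℝ) : ℂ) * (z * (starRingEnd ℂ) z) by ring,
        Complex.mul_conj, ← Complex.ofReal_mul, Complex.ofReal_re, Complex.normSq_eq_norm_sq]
    have h2 : (z * (starRingEnd ℂ) v).re = ((starRingEnd ℂ) z * v).re := by
      rw [← Complex.conj_re ((starRingEnd ℂ) z * v)]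
      simp [map_mul]
    rw [map_add, mul_add, Complex.add_re, h1, h2, hsplit, hG]
    ring
  rw [hpt, integral_add ((hI1int.const_mul _)) hGint, integral_const_mul, hGval, ← hI]
  field_simp
  ring
end

section
/- For every q with 0 < q ≤ 1 there exists a constant C > 0 such that for all z, w ∈ ℂ: | f(z+w) − f(z) − df(z)(w) | ≤ C |w|^{1+q}, where f(z) := |z|^q z and df(z) denotes its real Fréchet differential (with df(0) := 0). -/
set_option maxHeartbeats 1000000

open Complex Real Set

lemma scalar_taylor {p : ℝ} (hp0 : 0 < p) (hp1 : p ≤ 1) {x : ℝ} (hx : 1/4 ≤ x) :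
    |x ^ p - 1 - p * (x - 1)| ≤ 4 * (x - 1) ^ 2 := by
  -- Step A: |y^(p-1) - 1| ≤ 16*(1-p)*|y-1| on Ici (1/4)
  have keyA : ∀ y ∈ Set.Ici (1/4 : ℝ), |y ^ (p - 1) - 1| ≤ 16 * (1 - p) * |y - 1| := by
    intro y hy
    have h1 : (1:ℝ) ∈ Set.Ici (1/4 : ℝ) := by norm_num
    have := (convex_Ici (1/4 : ℝ)).norm_image_sub_le_of_norm_hasDerivWithin_le
      (f := fun t => t ^ (p - 1)) (f' := fun t => (p - 1) * t ^ (p - 2))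
      (C := 16 * (1 - p)) ?_ ?_ h1 hy
    · simpa [Real.norm_eq_abs, Real.one_rpow] using this
    · intro t ht
      have ht0 : (0:ℝ) < t := lt_of_lt_of_le (by norm_num) ht
      have := (Real.hasDerivAt_rpow_const (x := t) (p := p - 1) (Or.inl ht0.ne'))
      have h2 : p - 1 - 1 = p - 2 := by ring
      rw [h2] at this
      exact this.hasDerivWithinAt
    · intro t ht
      have ht0 : (0:ℝ) < t := lt_of_lt_of_le (by norm_num) ht
      have hb : t ^ (p - 2) ≤ (1/4 : ℝ) ^ (p - 2) :=
        Real.rpow_le_rpow_of_nonpos (by norm_num) ht (by linarith)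
      have hb2 : (1/4 : ℝ) ^ (p - 2) ≤ 16 := by
        have : (1/4 : ℝ) ^ (p - 2) = 4 ^ (2 - p) := by
          rw [show (1/4 : ℝ) = 4⁻¹ by norm_num, ← Real.rpow_neg_one,
            ← Real.rpow_mul (by norm_num : (0:ℝ) ≤ 4)]
          congr 1; ring
        rw [this]
        calc (4:ℝ) ^ (2 - p) ≤ 4 ^ (2:ℝ) :=
              Real.rpow_le_rpow_of_exponent_le (by norm_num) (by linarith)
          _ = 16 := by
              rw [show (2:ℝ) = ((2:ℕ):ℝ) by norm_num, Real.rpow_natCast]; norm_num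
      have hpos : 0 ≤ t ^ (p - 2) := (Real.rpow_pos_of_pos ht0 _).le
      rw [Real.norm_eq_abs, abs_mul, _root_.abs_of_nonneg hpos, _root_.abs_of_nonpos (by linarith)]
      calc (-(p - 1)) * t ^ (p - 2) = (1 - p) * t ^ (p - 2) := by ring
        _ ≤ (1 - p) * 16 := by
            apply mul_le_mul_of_nonneg_left (hb.trans hb2) (by linarith)
        _ = 16 * (1 - p) := by ring
  -- Step B: MVT on g on uIcc 1 x
  have h1mem : (1:ℝ) ∈ uIcc (1:ℝ) x := left_mem_uIcc
  have hxmem : x ∈ uIcc (1:ℝ) x := right_mem_uIcc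
  have hsub : ∀ y ∈ uIcc (1:ℝ) x, (1/4 : ℝ) ≤ y ∧ |y - 1| ≤ |x - 1| := by
    intro y hy
    rcases le_total (1:ℝ) x with h | h
    · rw [uIcc_of_le h, mem_Icc] at hy
      constructor
      · linarith [hy.1]
      · rw [_root_.abs_of_nonneg (by linarith [hy.1]), _root_.abs_of_nonneg (by linarith)]
        linarith [hy.2]
    · rw [uIcc_of_ge h, mem_Icc] at hy
      constructor
      · linarith [hy.1]
      · rw [_root_.abs_of_nonpos (by linarith [hy.2]), _root_.abs_of_nonpos (by linarith)]
        linarith [hy.1]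
  have key := (convex_uIcc (1:ℝ) x).norm_image_sub_le_of_norm_hasDerivWithin_le
    (f := fun t => t ^ p - 1 - p * (t - 1)) (f' := fun t => p * t ^ (p - 1) - p)
    (C := 4 * |x - 1|) ?_ ?_ h1mem hxmem
  · norm_num [Real.one_rpow, Real.norm_eq_abs] at key
    calc |x ^ p - 1 - p * (x - 1)| ≤ 4 * |x - 1| * |x - 1| := key
      _ = 4 * (x - 1) ^ 2 := by rw [mul_assoc, ← _root_.sq_abs (x - 1)]; ring
  · intro t ht
    have ht0 : (0:ℝ) < t := lt_of_lt_of_le (by norm_num) (hsub t ht).1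
    have hd := (Real.hasDerivAt_rpow_const (x := t) (p := p) (Or.inl ht0.ne'))
    have : HasDerivAt (fun t => t ^ p - 1 - p * (t - 1)) (p * t ^ (p - 1) - p) t := by
      have := (hd.sub_const 1).sub (((hasDerivAt_id t).sub_const 1).const_mul p)
      rw [mul_one] at this; exact this
    exact this.hasDerivWithinAt
  · intro t ht
    obtain ⟨ht4, htx⟩ := hsub t ht
    have hA := keyA t ht4
    rw [Real.norm_eq_abs, show p * t ^ (p - 1) - p = p * (t ^ (p - 1) - 1) by ring,
      abs_mul, _root_.abs_of_nonneg hp0.le]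
    calc p * |t ^ (p - 1) - 1| ≤ p * (16 * (1 - p) * |t - 1|) :=
          mul_le_mul_of_nonneg_left hA hp0.le
      _ = 16 * (p * (1 - p)) * |t - 1| := by ring
      _ ≤ 16 * (1/4) * |x - 1| := by
          apply mul_le_mul (by nlinarith [sq_nonneg (p - 1/2)]) htx (abs_nonneg _) (by norm_num)
      _ = 4 * |x - 1| := by ring


-- helper: r^(q-2) * r * r = r^q for r ≥ 0, 0 < q ≤ 1
lemma rpow_helper {q r : ℝ} (hq0 : 0 < q) (hq1 : q ≤ 1) (hr : 0 ≤ r) :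
    r ^ (q - 2) * r * r = r ^ q := by
  rcases eq_or_lt_of_le hr with h | h
  · rw [← h, Real.zero_rpow (by linarith), Real.zero_rpow (by linarith)]; ring
  · rw [show r ^ (q - 2) * r * r = r ^ (q - 2) * r ^ (1:ℝ) * r ^ (1:ℝ) by
      rw [Real.rpow_one], ← Real.rpow_add h, ← Real.rpow_add h,
      show q - 2 + 1 + 1 = q by ring]

lemma rpow_helper2 {q s : ℝ} (hq0 : 0 < q) (hs : 0 ≤ s) :
    s ^ q * s = s ^ (1 + q) := by
  rcases eq_or_lt_of_le hs with h | h
  · rw [← h, Real.zero_rpow (by linarith), Real.zero_rpow (by linarith)]; ring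
  · rw [show s ^ q * s = s ^ q * s ^ (1:ℝ) by rw [Real.rpow_one], ← Real.rpow_add h,
      add_comm]

/-- for `0 < q ≤ 1`, the first-order Taylor remainder of `f(z) = |z|^q z`
satisfies `|f(z+w) − f(z) − df(z)(w)| ≤ C|w|^{1+q}`, where
`df(z)(w) = |z|^q w + q|z|^{q−2} Re(conj(z) w) z` (with `df(0) = 0`; note that
`‖(0:ℂ)‖ ^ q = 0` and `‖(0:ℂ)‖ ^ (q-2) = 0` for the real power function). -/
theorem f_taylor_first_order (q : ℝ) (hq0 : 0 < q) (hq1 : q ≤ 1) :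
    ∃ C : ℝ, 0 < C ∧ ∀ z w : ℂ,
      ‖((‖z + w‖ ^ q : ℝ) : ℂ) * (z + w) - ((‖z‖ ^ q : ℝ) : ℂ) * z -
          (((‖z‖ ^ q : ℝ) : ℂ) * w +
            ((q * ‖z‖ ^ (q - 2) * ((starRingEnd ℂ) z * w).re : ℝ) : ℂ) * z)‖
        ≤ C * ‖w‖ ^ (1 + q) := by
  refine ⟨100, by norm_num, fun z w => ?_⟩
  set r := ‖z‖ with hrdef
  set s := ‖w‖ with hsdef
  have hr0 : 0 ≤ r := norm_nonneg z
  have hs0 : 0 ≤ s := norm_nonneg w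
  set A := ‖z + w‖ ^ q with hAdef
  set B := r ^ q with hBdef
  set R := ((starRingEnd ℂ) z * w).re with hRdef
  set D := q * r ^ (q - 2) * R with hDdef
  have hA0 : 0 ≤ A := Real.rpow_nonneg (norm_nonneg _) q
  have hB0 : 0 ≤ B := Real.rpow_nonneg hr0 q
  have hrq2 : 0 ≤ r ^ (q - 2) := Real.rpow_nonneg hr0 _
  have hP : 0 ≤ s ^ (1 + q) := Real.rpow_nonneg hs0 _
  have hRabs : |R| ≤ r * s := by
    calc |R| ≤ ‖(starRingEnd ℂ) z * w‖ := Complex.abs_re_le_norm _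
      _ = r * s := by
          rw [norm_mul, Complex.norm_conj]
  have hDabs : |D| ≤ q * r ^ (q - 2) * (r * s) := by
    rw [hDdef, abs_mul, _root_.abs_of_nonneg (by positivity : (0:ℝ) ≤ q * r ^ (q - 2))]
    exact mul_le_mul_of_nonneg_left hRabs (by positivity)
  -- the decomposition
  have hid : ((A : ℝ) : ℂ) * (z + w) - ((B : ℝ) : ℂ) * z -
      (((B : ℝ) : ℂ) * w + ((D : ℝ) : ℂ) * z)
      = ((A - B - D : ℝ) : ℂ) * (z + w) + ((D : ℝ) : ℂ) * w := by
    push_cast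
    ring
  have hnorm : ‖((A : ℝ) : ℂ) * (z + w) - ((B : ℝ) : ℂ) * z -
      (((B : ℝ) : ℂ) * w + ((D : ℝ) : ℂ) * z)‖
      ≤ |A - B - D| * ‖z + w‖ + |D| * s := by
    rw [hid]
    calc ‖((A - B - D : ℝ) : ℂ) * (z + w) + ((D : ℝ) : ℂ) * w‖
        ≤ ‖((A - B - D : ℝ) : ℂ) * (z + w)‖ + ‖((D : ℝ) : ℂ) * w‖ := norm_add_le _ _
      _ = |A - B - D| * ‖z + w‖ + |D| * s := by
          rw [norm_mul, norm_mul, Complex.norm_real, Complex.norm_real,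
            Real.norm_eq_abs, Real.norm_eq_abs]
  have hzw_ub : ‖z + w‖ ≤ r + s := norm_add_le z w
  by_cases hc : r ≤ 2 * s
  -- easy case : ‖z‖ ≤ 2‖w‖
  · have h2q : (2:ℝ) ^ q ≤ 2 := by
      calc (2:ℝ) ^ q ≤ 2 ^ (1:ℝ) := Real.rpow_le_rpow_of_exponent_le (by norm_num) hq1
        _ = 2 := Real.rpow_one 2
    have h3q : (3:ℝ) ^ q ≤ 3 := by
      calc (3:ℝ) ^ q ≤ 3 ^ (1:ℝ) := Real.rpow_le_rpow_of_exponent_le (by norm_num) hq1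
        _ = 3 := Real.rpow_one 3
    have hsq : s ^ q * s = s ^ (1 + q) := rpow_helper2 hq0 hs0
    have hT1 : A * ‖z + w‖ ≤ 9 * s ^ (1 + q) := by
      have hzw3 : ‖z + w‖ ≤ 3 * s := by linarith
      have hA3 : A ≤ (3 * s) ^ q :=
        Real.rpow_le_rpow (norm_nonneg _) hzw3 hq0.le
      calc A * ‖z + w‖ ≤ (3 * s) ^ q * (3 * s) :=
            mul_le_mul hA3 hzw3 (norm_nonneg _) (Real.rpow_nonneg (by linarith) q)
        _ = (3 ^ q * 3) * (s ^ q * s) := by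
            rw [Real.mul_rpow (by norm_num) hs0]; ring
        _ ≤ 9 * s ^ (1 + q) := by
            rw [hsq]
            apply mul_le_mul_of_nonneg_right _ hP
            nlinarith [Real.rpow_nonneg (show (0:ℝ) ≤ 3 by norm_num) q]
    have hB2 : B ≤ (2 * s) ^ q := Real.rpow_le_rpow hr0 hc hq0.le
    have h2s : (2 * s) ^ q = 2 ^ q * s ^ q := Real.mul_rpow (by norm_num) hs0
    have hsqq : 0 ≤ s ^ q := Real.rpow_nonneg hs0 q
    have hT2 : B * r ≤ 4 * s ^ (1 + q) := by
      calc B * r ≤ (2 * s) ^ q * (2 * s) :=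
            mul_le_mul hB2 hc hr0 (Real.rpow_nonneg (by linarith) q)
        _ = (2 ^ q * 2) * (s ^ q * s) := by rw [h2s]; ring
        _ ≤ 4 * s ^ (1 + q) := by
            rw [hsq]
            apply mul_le_mul_of_nonneg_right _ hP
            nlinarith [Real.rpow_nonneg (show (0:ℝ) ≤ 2 by norm_num) q]
    have hT3 : B * s ≤ 2 * s ^ (1 + q) := by
      calc B * s ≤ (2 * s) ^ q * s :=
            mul_le_mul_of_nonneg_right hB2 hs0
        _ = 2 ^ q * (s ^ q * s) := by rw [h2s]; ring
        _ ≤ 2 * s ^ (1 + q) := by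
            rw [hsq]; exact mul_le_mul_of_nonneg_right h2q hP
    have hT4 : |D| * r ≤ 2 * s ^ (1 + q) := by
      calc |D| * r ≤ q * r ^ (q - 2) * (r * s) * r :=
            mul_le_mul_of_nonneg_right hDabs hr0
        _ = (q * s) * (r ^ (q - 2) * r * r) := by ring
        _ = (q * s) * r ^ q := by rw [rpow_helper hq0 hq1 hr0]
        _ ≤ (1 * s) * (2 * s) ^ q := by
            apply mul_le_mul (by nlinarith) hB2 hB0 (by linarith)
        _ = 2 ^ q * (s ^ q * s) := by rw [h2s]; ring
        _ ≤ 2 * s ^ (1 + q) := by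
            rw [hsq]; exact mul_le_mul_of_nonneg_right h2q hP
    calc ‖((A : ℝ) : ℂ) * (z + w) - ((B : ℝ) : ℂ) * z -
        (((B : ℝ) : ℂ) * w + ((D : ℝ) : ℂ) * z)‖
        ≤ ‖((A : ℝ) : ℂ) * (z + w)‖ + ‖((B : ℝ) : ℂ) * z‖ +
            (‖((B : ℝ) : ℂ) * w‖ + ‖((D : ℝ) : ℂ) * z‖) := by
          refine (norm_sub_le _ _).trans ?_
          gcongr
          · exact norm_sub_le _ _
          · exact norm_add_le _ _
      _ = A * ‖z + w‖ + B * r + (B * s + |D| * r) := by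
          simp only [norm_mul, Complex.norm_real, Real.norm_eq_abs,
            _root_.abs_of_nonneg hA0, _root_.abs_of_nonneg hB0, ← hrdef, ← hsdef]
      _ ≤ 9 * s ^ (1 + q) + 4 * s ^ (1 + q) + (2 * s ^ (1 + q) + 2 * s ^ (1 + q)) := by
          gcongr
      _ ≤ 100 * s ^ (1 + q) := by linarith
  -- hard case : 2‖w‖ < ‖z‖
  · push_neg at hc
    have hr : 0 < r := by linarith
    have hsr : s < r := by linarith
    have hzw_lb : r / 2 ≤ ‖z + w‖ := by
      have h1 : r ≤ ‖z + w‖ + s := by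
        calc r = ‖(z + w) - w‖ := by rw [add_sub_cancel_right]
          _ ≤ ‖z + w‖ + s := norm_sub_le _ _
      linarith
    set x := ‖z + w‖ ^ 2 / r ^ 2 with hxdef
    have hr2 : (0:ℝ) < r ^ 2 := by positivity
    have hx4 : 1/4 ≤ x := by
      rw [hxdef, le_div_iff₀ hr2]
      nlinarith [hzw_lb, norm_nonneg (z + w)]
    have hpow2 : ∀ a : ℝ, 0 ≤ a → (a ^ 2) ^ (q / 2) = a ^ q := by
      intro a ha
      rw [← Real.rpow_natCast a 2, ← Real.rpow_mul ha]
      congr 1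
      push_cast
      ring
    have hA : A = r ^ q * x ^ (q / 2) := by
      have h1 : ‖z + w‖ ^ 2 = x * r ^ 2 := by
        rw [hxdef, div_mul_cancel₀ _ (ne_of_gt hr2)]
      calc A = (‖z + w‖ ^ 2) ^ (q / 2) := (hpow2 _ (norm_nonneg _)).symm
        _ = (x * r ^ 2) ^ (q / 2) := by rw [h1]
        _ = x ^ (q / 2) * (r ^ 2) ^ (q / 2) :=
            Real.mul_rpow (by linarith) (by positivity)
        _ = r ^ q * x ^ (q / 2) := by rw [hpow2 r hr0]; ring
    have hRe2 : (z * (starRingEnd ℂ) w).re = R := by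
      rw [show z * (starRingEnd ℂ) w = (starRingEnd ℂ) ((starRingEnd ℂ) z * w) by
        rw [map_mul, Complex.conj_conj], Complex.conj_re]
    have hsq : ‖z + w‖ ^ 2 = r ^ 2 + 2 * R + s ^ 2 := by
      rw [hrdef, hsdef,
        Complex.sq_norm, Complex.sq_norm, Complex.sq_norm, Complex.normSq_add, hRe2]
      ring
    have hxm1 : x - 1 = (2 * R + s ^ 2) / r ^ 2 := by
      rw [hxdef, hsq]; field_simp; ring
    have hxb : |x - 1| ≤ (5/2) * s / r := by
      rw [hxm1, abs_div, _root_.abs_of_nonneg hr2.le, div_le_div_iff₀ hr2 hr]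
      calc |2 * R + s ^ 2| * r ≤ (2 * (r * s) + s ^ 2) * r := by
            apply mul_le_mul_of_nonneg_right _ hr0
            calc |2 * R + s ^ 2| ≤ 2 * |R| + s ^ 2 := by
                  refine (abs_add_le _ _).trans ?_
                  rw [abs_mul, _root_.abs_of_nonneg (by norm_num : (0:ℝ) ≤ 2),
                    _root_.abs_of_nonneg (by positivity : (0:ℝ) ≤ s ^ 2)]
              _ ≤ 2 * (r * s) + s ^ 2 := by linarith [hRabs]
        _ ≤ 5/2 * s * r ^ 2 := by nlinarith [mul_nonneg (mul_nonneg hs0 (by linarith : (0:ℝ) ≤ r - 2*s)) hr0]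
    have hxb2 : (x - 1) ^ 2 ≤ (25/4) * s ^ 2 / r ^ 2 := by
      have h1 : (x - 1) ^ 2 = |x - 1| ^ 2 := (_root_.sq_abs _).symm
      have h2 : |x - 1| ^ 2 ≤ ((5/2) * s / r) ^ 2 := by
        apply pow_le_pow_left₀ (abs_nonneg _) hxb
      rw [h1]
      calc |x - 1| ^ 2 ≤ ((5/2) * s / r) ^ 2 := h2
        _ = (25/4) * s ^ 2 / r ^ 2 := by field_simp; ring
    have hE := scalar_taylor (p := q / 2) (by linarith) (by linarith) hx4
    have hrqeq : r ^ q = r ^ (q - 2) * r ^ 2 := by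
      rw [← rpow_helper hq0 hq1 hr0]; ring
    have hABD : A - B - D = r ^ q * (x ^ (q/2) - 1 - (q/2) * (x - 1))
        + (q/2) * r ^ (q - 2) * s ^ 2 := by
      rw [hA, hBdef, hDdef, hxm1, hrqeq]
      field_simp
      ring
    have hABDb : |A - B - D| ≤ 26 * r ^ (q - 2) * s ^ 2 := by
      rw [hABD]
      calc |r ^ q * (x ^ (q/2) - 1 - (q/2) * (x - 1)) + (q/2) * r ^ (q - 2) * s ^ 2|
          ≤ r ^ q * |x ^ (q/2) - 1 - (q/2) * (x - 1)| + (q/2) * r ^ (q - 2) * s ^ 2 := by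
            refine (abs_add_le _ _).trans ?_
            rw [abs_mul, _root_.abs_of_nonneg hB0,
              _root_.abs_of_nonneg (by positivity : (0:ℝ) ≤ (q/2) * r ^ (q - 2) * s ^ 2)]
        _ ≤ r ^ q * (4 * (x - 1) ^ 2) + (q/2) * r ^ (q - 2) * s ^ 2 := by
            gcongr
        _ ≤ r ^ q * (4 * ((25/4) * s ^ 2 / r ^ 2)) + (q/2) * r ^ (q - 2) * s ^ 2 := by
            gcongr
        _ = 25 * (r ^ q / r ^ 2) * s ^ 2 + (q/2) * r ^ (q - 2) * s ^ 2 := by ring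
        _ = 25 * r ^ (q - 2) * s ^ 2 + (q/2) * r ^ (q - 2) * s ^ 2 := by
            rw [hrqeq]; field_simp
        _ ≤ 26 * r ^ (q - 2) * s ^ 2 := by nlinarith [mul_nonneg (by linarith : (0:ℝ) ≤ 1 - q) (mul_nonneg hrq2 (sq_nonneg s))]
    have hzw32 : ‖z + w‖ ≤ (3/2) * r := by linarith
    have hfinal : r ^ (q - 2) * r * s ^ 2 ≤ s ^ (1 + q) := by
      rcases eq_or_lt_of_le hs0 with h | h
      · rw [← h]
        simp [Real.zero_rpow (by linarith : 1 + q ≠ 0)]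
      · have h1 : r ^ (q - 2) * r = r ^ (q - 1) := by
          rw [show q - 1 = q - 2 + 1 by ring, Real.rpow_add hr, Real.rpow_one]
        rw [h1]
        have h2 : r ^ (q - 1) = (r ^ (1 - q))⁻¹ := by
          rw [show q - 1 = -(1 - q) by ring, Real.rpow_neg hr0]
        have h3 : s ^ (1 - q) ≤ r ^ (1 - q) :=
          Real.rpow_le_rpow hs0 hsr.le (by linarith)
        have h4 : (0:ℝ) < r ^ (1 - q) := Real.rpow_pos_of_pos hr _
        rw [h2, inv_mul_eq_div, div_le_iff₀ h4]
        calc s ^ 2 = s ^ (1 + q) * s ^ (1 - q) := by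
              rw [← Real.rpow_add h, show 1 + q + (1 - q) = (2:ℝ) by ring,
                ← Real.rpow_natCast s 2]
              norm_num
          _ ≤ s ^ (1 + q) * r ^ (1 - q) := mul_le_mul_of_nonneg_left h3 hP
    calc ‖((A : ℝ) : ℂ) * (z + w) - ((B : ℝ) : ℂ) * z -
        (((B : ℝ) : ℂ) * w + ((D : ℝ) : ℂ) * z)‖
        ≤ |A - B - D| * ‖z + w‖ + |D| * s := hnorm
      _ ≤ (26 * r ^ (q - 2) * s ^ 2) * ((3/2) * r) + (q * r ^ (q - 2) * (r * s)) * s := by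
          gcongr
      _ ≤ 39 * (r ^ (q - 2) * r * s ^ 2) + 1 * (r ^ (q - 2) * r * s ^ 2) := by
          nlinarith [mul_nonneg (mul_nonneg hrq2 hr0) (sq_nonneg s)]
      _ = 40 * (r ^ (q - 2) * r * s ^ 2) := by ring
      _ ≤ 40 * s ^ (1 + q) := by linarith [hfinal]
      _ ≤ 100 * s ^ (1 + q) := by linarith
end

section
/- For every q with 0 < q ≤ 1 there exists a constant C > 0 such that for all z ∈ ℂ \ {0} and all w ∈ ℂ: | |z+w|^{q+2}/(q+2) − |z|^{q+2}/(q+2) − Re(|z|^q z · conj(w)) − (1/2)( |z|^q |w|² + q |z|^{q−2} (Re(conj(z)·w))² ) | ≤ C |w|^{q+2}. -/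
open Set Real Complex

private lemma pow2_rpow (x : ℝ) (hx : 0 ≤ x) (r : ℝ) : (x^2) ^ r = x ^ (2*r) := by
  rw [← Real.rpow_natCast x 2, ← Real.rpow_mul hx]
  norm_num

private lemma taylor2_bound' {g g1 g2 g3 : ℝ → ℝ} {M : ℝ} (hM0 : 0 ≤ M)
    (hd1 : ∀ t ∈ Icc (0:ℝ) 1, HasDerivAt g (g1 t) t)
    (hd2 : ∀ t ∈ Icc (0:ℝ) 1, HasDerivAt g1 (g2 t) t)
    (hd3 : ∀ t ∈ Icc (0:ℝ) 1, HasDerivAt g2 (g3 t) t)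
    (hB : ∀ t ∈ Icc (0:ℝ) 1, |g3 t| ≤ M) :
    |g 1 - g 0 - g1 0 - g2 0 / 2| ≤ M := by
  have hconv : Convex ℝ (Icc (0:ℝ) 1) := convex_Icc _ _
  have h0 : (0:ℝ) ∈ Icc (0:ℝ) 1 := by norm_num
  have h1 : (1:ℝ) ∈ Icc (0:ℝ) 1 := by norm_num
  -- Step A
  have stepA : ∀ t ∈ Icc (0:ℝ) 1, |g2 t - g2 0| ≤ M := by
    intro t ht
    have := hconv.norm_image_sub_le_of_norm_hasDerivWithin_le
      (f := g2) (f' := g3) (C := M)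
      (fun x hx => (hd3 x hx).hasDerivWithinAt)
      (fun x hx => by simpa [Real.norm_eq_abs] using hB x hx) h0 ht
    rw [Real.norm_eq_abs, Real.norm_eq_abs] at this
    calc |g2 t - g2 0| ≤ M * |t - 0| := this
      _ ≤ M * 1 := by
          apply mul_le_mul_of_nonneg_left _ hM0
          rw [_root_.abs_of_nonneg (by linarith [ht.1] : (0:ℝ) ≤ t - 0)]
          linarith [ht.2]
      _ = M := mul_one M
  -- Step B
  set h1f : ℝ → ℝ := fun t => g1 t - g1 0 - g2 0 * t with hh1f
  have hd1f : ∀ t ∈ Icc (0:ℝ) 1, HasDerivAt h1f (g2 t - g2 0) t := by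
    intro t ht
    have := ((hd2 t ht).sub_const (g1 0)).sub ((hasDerivAt_id t).const_mul (g2 0))
    exact this.congr_deriv (by ring)
  have stepB : ∀ t ∈ Icc (0:ℝ) 1, |h1f t| ≤ M := by
    intro t ht
    have := hconv.norm_image_sub_le_of_norm_hasDerivWithin_le
      (f := h1f) (f' := fun t => g2 t - g2 0) (C := M)
      (fun x hx => (hd1f x hx).hasDerivWithinAt)
      (fun x hx => by simpa [Real.norm_eq_abs] using stepA x hx) h0 ht
    rw [Real.norm_eq_abs, Real.norm_eq_abs] at this
    have h10 : h1f 0 = 0 := by simp [hh1f]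
    calc |h1f t| = |h1f t - h1f 0| := by rw [h10]; ring_nf
      _ ≤ M * |t - 0| := this
      _ ≤ M * 1 := by
          apply mul_le_mul_of_nonneg_left _ hM0
          rw [_root_.abs_of_nonneg (by linarith [ht.1] : (0:ℝ) ≤ t - 0)]
          linarith [ht.2]
      _ = M := mul_one M
  -- Step C
  set hf : ℝ → ℝ := fun t => g t - g 0 - g1 0 * t - g2 0 * t ^ 2 / 2 with hhf
  have hdf : ∀ t ∈ Icc (0:ℝ) 1, HasDerivAt hf (h1f t) t := by
    intro t ht
    have hp : HasDerivAt (fun t : ℝ => g2 0 * t ^ 2 / 2) (g2 0 * t) t := by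
      have := ((hasDerivAt_pow 2 t).const_mul (g2 0)).div_const 2
      refine this.congr_deriv ?_
      norm_num
      ring
    have := (((hd1 t ht).sub_const (g 0)).sub ((hasDerivAt_id t).const_mul (g1 0))).sub hp
    refine this.congr_deriv ?_
    simp [hh1f]
  have := hconv.norm_image_sub_le_of_norm_hasDerivWithin_le
    (f := hf) (f' := h1f) (C := M)
    (fun x hx => (hdf x hx).hasDerivWithinAt)
    (fun x hx => by simpa [Real.norm_eq_abs] using stepB x hx) h0 h1
  rw [Real.norm_eq_abs, Real.norm_eq_abs] at this
  have e0 : hf 0 = 0 := by simp [hhf]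
  have e1 : hf 1 = g 1 - g 0 - g1 0 - g2 0 / 2 := by simp [hhf]
  calc |g 1 - g 0 - g1 0 - g2 0 / 2| = |hf 1 - hf 0| := by rw [e0, e1]; ring_nf
    _ ≤ M * |1 - 0| := this
    _ = M := by norm_num

private lemma g3_bound' (q c a b e : ℝ) (hq0 : 0 < q) (hq1 : q ≤ 1) (hc : 0 < c) (hb : 0 < b)
    (he : e = q/2 + 1) (t : ℝ) (X : ℝ) (hX4 : c/4 ≤ X) (hX0 : 0 < X)
    (hkey : (a + b*t)^2 ≤ b * X) :
    |6*(e-1)*b*(a+b*t) * X ^ (e-2) + 4*(e-1)*(e-2)*(a+b*t)^3 * X ^ (e-3)|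
      ≤ 5 * b ^ ((3:ℝ)/2) * (c/4) ^ ((q-1)/2) := by
  have he1 : 0 < e - 1 := by rw [he]; linarith
  have he2 : e - 2 < 0 := by rw [he]; linarith
  have he12 : e - 1 ≤ 1/2 := by rw [he]; linarith
  set B := b ^ ((1:ℝ)/2) with hB
  set Y := X ^ ((1:ℝ)/2) with hY
  have hB0 : 0 < B := Real.rpow_pos_of_pos hb _
  have hY0 : 0 < Y := Real.rpow_pos_of_pos hX0 _
  have hA : |a + b*t| ≤ B * Y := by
    rw [hB, hY, ← Real.mul_rpow hb.le hX0.le, ← Real.sqrt_eq_rpow, ← Real.sqrt_sq_eq_abs]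
    exact Real.sqrt_le_sqrt hkey
  have hXe2 : (0:ℝ) < X ^ (e-2) := Real.rpow_pos_of_pos hX0 _
  have hXe3 : (0:ℝ) < X ^ (e-3) := Real.rpow_pos_of_pos hX0 _
  have hb32 : b * B = b ^ ((3:ℝ)/2) := by
    rw [hB, show (3:ℝ)/2 = 1 + 1/2 by norm_num, Real.rpow_add hb, Real.rpow_one]
  have hYX : Y * X ^ (e-2) = X ^ (e - 3/2) := by
    rw [hY, show e - 3/2 = 1/2 + (e-2) by ring, Real.rpow_add hX0]
  have hY3 : Y ^ 3 * X ^ (e-3) = X ^ (e - 3/2) := by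
    rw [hY, ← Real.rpow_natCast (X ^ ((1:ℝ)/2)) 3, ← Real.rpow_mul hX0.le,
      show (1:ℝ)/2 * (3:ℕ) = (3:ℝ)/2 by push_cast; norm_num,
      ← Real.rpow_add hX0]
    congr 1; ring
  have hXc : X ^ (e - 3/2) ≤ (c/4) ^ (e - 3/2) :=
    Real.rpow_le_rpow_of_nonpos (by linarith) hX4 (by rw [he]; linarith)
  have hcq : (c/4) ^ (e - 3/2) = (c/4) ^ ((q-1)/2) := by rw [he]; congr 1; ring
  have h6b : (0:ℝ) ≤ 6*(e-1)*b := by nlinarith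
  have h4e : (0:ℝ) ≤ 4*(e-1)*(2-e) := by nlinarith
  have eq1 : |6*(e-1)*b*(a+b*t) * X ^ (e-2)| = 6*(e-1)*b*|a+b*t| * X ^ (e-2) := by
    rw [abs_mul, abs_mul, _root_.abs_of_nonneg hXe2.le, _root_.abs_of_nonneg h6b]
  have eq2 : |4*(e-1)*(e-2)*(a+b*t)^3 * X ^ (e-3)|
      = 4*(e-1)*(2-e)*|a+b*t|^3 * X ^ (e-3) := by
    rw [abs_mul, abs_mul, _root_.abs_of_nonneg hXe3.le, ← _root_.abs_pow,
      _root_.abs_of_nonpos (by nlinarith : 4*(e-1)*(e-2) ≤ 0)]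
    ring
  have m1 : 6*(e-1)*b*|a+b*t| * X ^ (e-2) ≤ 6*(e-1)*b*(B*Y) * X ^ (e-2) :=
    mul_le_mul_of_nonneg_right (mul_le_mul_of_nonneg_left hA h6b) hXe2.le
  have m2 : 4*(e-1)*(2-e)*|a+b*t|^3 * X ^ (e-3) ≤ 4*(e-1)*(2-e)*(B*Y)^3 * X ^ (e-3) :=
    mul_le_mul_of_nonneg_right
      (mul_le_mul_of_nonneg_left (pow_le_pow_left₀ (abs_nonneg _) hA 3) h4e) hXe3.le
  have hcpos : (0:ℝ) < (c/4) ^ ((q-1)/2) := Real.rpow_pos_of_pos (by linarith) _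
  calc |6*(e-1)*b*(a+b*t) * X ^ (e-2) + 4*(e-1)*(e-2)*(a+b*t)^3 * X ^ (e-3)|
      ≤ |6*(e-1)*b*(a+b*t) * X ^ (e-2)| + |4*(e-1)*(e-2)*(a+b*t)^3 * X ^ (e-3)| := abs_add_le _ _
    _ = 6*(e-1)*b*|a+b*t| * X ^ (e-2) + 4*(e-1)*(2-e)*|a+b*t|^3 * X ^ (e-3) := by
        rw [eq1, eq2]
    _ ≤ 6*(e-1)*b*(B*Y) * X ^ (e-2) + 4*(e-1)*(2-e)*(B*Y)^3 * X ^ (e-3) :=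
        add_le_add m1 m2
    _ = (6*(e-1) + 4*(e-1)*(2-e)) * (b ^ ((3:ℝ)/2) * X ^ (e - 3/2)) := by
        have hYY : Y ^ 3 * X ^ (e-3) = Y * X ^ (e-2) := by rw [hYX, hY3]
        have hB3 : B ^ 3 = b * B := by
          rw [hB, ← Real.rpow_natCast (b ^ ((1:ℝ)/2)) 3, ← Real.rpow_mul hb.le,
            show (1:ℝ)/2 * (3:ℕ) = (3:ℝ)/2 by push_cast; norm_num, ← hb32, hB]
        calc 6*(e-1)*b*(B*Y) * X ^ (e-2) + 4*(e-1)*(2-e)*(B*Y)^3 * X ^ (e-3)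
            = 6*(e-1)*(b*B)*(Y * X ^ (e-2)) + 4*(e-1)*(2-e)*(B^3)*(Y^3 * X ^ (e-3)) := by
              ring
          _ = (6*(e-1) + 4*(e-1)*(2-e)) * (b ^ ((3:ℝ)/2) * X ^ (e - 3/2)) := by
              rw [hYY, hB3, hb32, hYX]; ring
    _ ≤ 5 * (b ^ ((3:ℝ)/2) * X ^ (e - 3/2)) := by
        have h5 : 6*(e-1) + 4*(e-1)*(2-e) ≤ 5 := by
          have h2 : (e-1)*(2-e) ≤ (e-1)*1 := mul_le_mul_of_nonneg_left (by linarith) he1.le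
          linarith
        have hpos : (0:ℝ) ≤ b ^ ((3:ℝ)/2) * X ^ (e - 3/2) := by positivity
        exact mul_le_mul_of_nonneg_right h5 hpos
    _ ≤ 5 * b ^ ((3:ℝ)/2) * (c/4) ^ ((q-1)/2) := by
        rw [← hcq]
        calc 5 * (b ^ ((3:ℝ)/2) * X ^ (e - 3/2)) = 5 * b ^ ((3:ℝ)/2) * X ^ (e - 3/2) := by ring
          _ ≤ 5 * b ^ ((3:ℝ)/2) * (c/4) ^ (e - 3/2) :=
              mul_le_mul_of_nonneg_left hXc (by positivity)

private lemma core' (q c a b : ℝ) (hq0 : 0 < q) (hq1 : q ≤ 1) (hc : 0 < c) (hb : 0 < b)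
    (hab : a ^ 2 ≤ c * b) (hs4 : ∀ t ∈ Icc (0:ℝ) 1, c / 4 ≤ c + 2*a*t + b*t^2) :
    |(c + 2*a + b) ^ (q/2+1) / (q+2) - c ^ (q/2+1) / (q+2) - a * c ^ (q/2)
      - (1/2) * (b * c ^ (q/2) + q * a^2 * c ^ (q/2-1))|
      ≤ 5 * b ^ ((3:ℝ)/2) * (c/4) ^ ((q-1)/2) := by
  set e : ℝ := q/2 + 1 with he
  set s : ℝ → ℝ := fun t => c + 2*a*t + b*t^2 with hsdef
  have hspos : ∀ t ∈ Icc (0:ℝ) 1, 0 < s t := fun t ht => lt_of_lt_of_le (by linarith) (hs4 t ht)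
  have hs' : ∀ t : ℝ, HasDerivAt s (2*a + 2*b*t) t := by
    intro t
    have h1 : HasDerivAt (fun t:ℝ => c + 2*a*t + b*t^2) (0 + 2*a*1 + b*(2*t^1)) t :=
      ((hasDerivAt_const t c).add ((hasDerivAt_id t).const_mul (2*a))).add
        ((hasDerivAt_pow 2 t).const_mul b)
    convert h1 using 1
    ring_nf
  set g : ℝ → ℝ := fun t => s t ^ e / (q+2) with hg
  set g1 : ℝ → ℝ := fun t => (a + b*t) * s t ^ (e-1) with hg1
  set g2 : ℝ → ℝ := fun t => b * s t ^ (e-1) + 2*(e-1)*(a+b*t)^2 * s t ^ (e-2) with hg2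
  set g3 : ℝ → ℝ := fun t => 6*(e-1)*b*(a+b*t) * s t ^ (e-2)
      + 4*(e-1)*(e-2)*(a+b*t)^3 * s t ^ (e-3) with hg3
  have habt : ∀ t : ℝ, HasDerivAt (fun t : ℝ => a + b * t) b t := by
    intro t
    exact (((hasDerivAt_id t).const_mul b).const_add a).congr_deriv (mul_one b)
  have hd1 : ∀ t ∈ Icc (0:ℝ) 1, HasDerivAt g (g1 t) t := by
    intro t ht
    have := ((hs' t).rpow_const (p := e) (Or.inl (hspos t ht).ne')).div_const (q+2)
    refine this.congr_deriv (Eq.symm ?_)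
    simp only [hg1]
    have h2e : q + 2 = 2 * e := by rw [he]; ring
    rw [h2e]
    have he0 : e ≠ 0 := by rw [he]; positivity
    field_simp
  have hd2 : ∀ t ∈ Icc (0:ℝ) 1, HasDerivAt g1 (g2 t) t := by
    intro t ht
    have := (habt t).mul ((hs' t).rpow_const (p := e-1) (Or.inl (hspos t ht).ne'))
    refine this.congr_deriv (Eq.symm ?_)
    simp only [hg2]
    rw [show e - 1 - 1 = e - 2 by ring]
    ring
  have hd3 : ∀ t ∈ Icc (0:ℝ) 1, HasDerivAt g2 (g3 t) t := by
    intro t ht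
    have hne := (hspos t ht).ne'
    have t1 := ((hs' t).rpow_const (p := e-1) (Or.inl hne)).const_mul b
    have t2 := (((habt t).pow 2).const_mul (2*(e-1))).mul
      ((hs' t).rpow_const (p := e-2) (Or.inl hne))
    have := t1.add t2
    refine this.congr_deriv (Eq.symm ?_)
    simp only [hg3, Pi.pow_apply]
    rw [show e - 1 - 1 = e - 2 by ring, show e - 2 - 1 = e - 3 by ring]
    ring
  set M : ℝ := 5 * b ^ ((3:ℝ)/2) * (c/4) ^ ((q-1)/2) with hM
  have hM0 : 0 ≤ M := by positivity
  have hBnd : ∀ t ∈ Icc (0:ℝ) 1, |g3 t| ≤ M := by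
    intro t ht
    have hkey : (a + b*t)^2 ≤ b * s t := by
      simp only [hsdef]
      nlinarith [hab]
    exact g3_bound' q c a b e hq0 hq1 hc hb he t (s t) (hs4 t ht) (hspos t ht) hkey
  have key := taylor2_bound' hM0 hd1 hd2 hd3 hBnd
  have harg : g 1 - g 0 - g1 0 - g2 0 / 2
      = (c + 2*a + b) ^ e / (q+2) - c ^ e / (q+2) - a * c ^ (e-1)
        - (1/2) * (b * c ^ (e-1) + q * a^2 * c ^ (e-2)) := by
    have hq2e : 2*(e-1) = q := by rw [he]; ring
    have e0 : s 0 = c := by simp [hsdef]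
    have e1 : s 1 = c + 2*a + b := by norm_num [hsdef]
    simp only [hg, hg1, hg2, e0, e1, mul_zero, add_zero]
    linear_combination (-(1:ℝ)/2) * a^2 * c ^ (e-2) * hq2e
  rw [harg] at key
  have r1 : c ^ (q/2) = c ^ (e-1) := by rw [he]; congr 1; ring
  have r2 : c ^ (q/2-1) = c ^ (e-2) := by rw [he]; congr 1; ring
  rw [r1, r2]
  exact key

/-- for `0 < q ≤ 1`, the second-order Taylor remainder of
`F(z) = |z|^{q+2}/(q+2)` satisfies, for `z ≠ 0`,
`|F(z+w) − F(z) − Re(f(z) conj w) − ½(|z|^q|w|² + q|z|^{q−2}(Re(conj(z)w))²)| ≤ C|w|^{q+2}`. -/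
theorem F_taylor_second_order (q : ℝ) (hq0 : 0 < q) (hq1 : q ≤ 1) :
    ∃ C : ℝ, 0 < C ∧ ∀ z : ℂ, z ≠ 0 → ∀ w : ℂ,
      |‖z + w‖ ^ (q + 2) / (q + 2) - ‖z‖ ^ (q + 2) / (q + 2)
          - (((‖z‖ ^ q : ℝ) : ℂ) * z * (starRingEnd ℂ) w).re
          - (1 / 2) * (‖z‖ ^ q * ‖w‖ ^ 2
              + q * ‖z‖ ^ (q - 2) * (((starRingEnd ℂ) z * w).re) ^ 2)|
        ≤ C * ‖w‖ ^ (q + 2) := by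
  refine ⟨24, by norm_num, ?_⟩
  intro z hz w
  by_cases hw : w = 0
  · subst hw
    simp [Real.zero_rpow (by positivity : q + 2 ≠ 0)]
  have hz0 : 0 < ‖z‖ := norm_pos_iff.mpr hz
  have hw0 : 0 < ‖w‖ := norm_pos_iff.mpr hw
  set a : ℝ := ((starRingEnd ℂ) z * w).re with ha
  set c : ℝ := ‖z‖^2 with hcdef
  set b : ℝ := ‖w‖^2 with hbdef
  have hc : 0 < c := by positivity
  have hb : 0 < b := by positivity
  have hareab : |a| ≤ ‖z‖ * ‖w‖ := by
    calc |a| ≤ ‖(starRingEnd ℂ) z * w‖ := Complex.abs_re_le_norm _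
      _ = ‖z‖ * ‖w‖ := by
          rw [norm_mul, Complex.norm_conj]
  have hab : a ^ 2 ≤ c * b := by
    have := mul_self_le_mul_self (abs_nonneg a) hareab
    calc a ^ 2 = |a| * |a| := by rw [abs_mul_abs_self a]; ring
      _ ≤ (‖z‖ * ‖w‖) * (‖z‖ * ‖w‖) := this
      _ = c * b := by rw [hcdef, hbdef]; ring
  have hnorm : ∀ t : ℝ, ‖z + (t:ℂ)*w‖^2 = c + 2*a*t + b*t^2 := by
    intro t
    rw [Complex.sq_norm, Complex.normSq_apply, ha, hcdef, hbdef,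
      Complex.sq_norm, Complex.sq_norm,
      Complex.normSq_apply, Complex.normSq_apply]
    simp [Complex.add_re, Complex.add_im, Complex.mul_re, Complex.mul_im]
    ring
  rcases le_or_gt ‖w‖ (‖z‖/2) with hcase | hcase
  · -- Taylor regime
    have hs4 : ∀ t ∈ Icc (0:ℝ) 1, c / 4 ≤ c + 2*a*t + b*t^2 := by
      intro t ht
      rw [← hnorm t]
      have h1 : ‖z‖/2 ≤ ‖z + (t:ℂ)*w‖ := by
        have h2 : ‖(t:ℂ)*w‖ ≤ ‖w‖ := by
          rw [norm_mul, Complex.norm_real, Real.norm_eq_abs,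
            _root_.abs_of_nonneg ht.1]
          nlinarith [ht.2, hw0]
        have h3 : ‖z‖ ≤ ‖z + (t:ℂ)*w‖ + ‖(t:ℂ)*w‖ := by
          simpa using norm_add_le (z + (t:ℂ)*w) (-((t:ℂ)*w))
        linarith
      calc c/4 = (‖z‖/2)^2 := by rw [hcdef]; ring
        _ ≤ ‖z + (t:ℂ)*w‖^2 := by
            apply pow_le_pow_left₀ (by positivity) h1
    have hcore := core' q c a b hq0 hq1 hc hb hab hs4
    -- rewrite the statement's expression into the core form
    have hzw : ‖z + w‖^2 = c + 2*a + b := by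
      have := hnorm 1
      simpa using this
    have E1 : ‖z + w‖ ^ (q+2) = (c + 2*a + b) ^ (q/2+1) := by
      rw [← hzw, pow2_rpow _ (norm_nonneg _)]
      congr 1; ring
    have E2 : ‖z‖ ^ (q+2) = c ^ (q/2+1) := by
      rw [hcdef, pow2_rpow _ (norm_nonneg _)]; congr 1; ring
    have E3 : ‖z‖ ^ q = c ^ (q/2) := by
      rw [hcdef, pow2_rpow _ (norm_nonneg _)]; congr 1; ring
    have E4 : ‖z‖ ^ (q-2) = c ^ (q/2-1) := by
      rw [hcdef, pow2_rpow _ (norm_nonneg _)]; congr 1; ring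
    have E5 : (((‖z‖ ^ q : ℝ) : ℂ) * z * (starRingEnd ℂ) w).re = ‖z‖ ^ q * a := by
      rw [ha]
      simp [Complex.mul_re, Complex.mul_im, Complex.conj_re, Complex.conj_im,
        Complex.ofReal_re, Complex.ofReal_im]
      ring
    rw [E5, E1, E2, E3, E4]
    have hfinal : 5 * b ^ ((3:ℝ)/2) * (c/4) ^ ((q-1)/2) ≤ 24 * ‖w‖ ^ (q+2) := by
      have hb32 : b ^ ((3:ℝ)/2) = ‖w‖ ^ (3:ℝ) := by
        rw [hbdef, pow2_rpow _ (norm_nonneg _)]; congr 1; ring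
      have hc4 : (c/4) ^ ((q-1)/2) = (‖z‖/2) ^ (q-1) := by
        rw [show c/4 = (‖z‖/2)^2 by rw [hcdef]; ring, pow2_rpow _ (by positivity)]
        congr 1; ring
      have hmn : (‖z‖/2) ^ (q-1) ≤ ‖w‖ ^ (q-1) :=
        Real.rpow_le_rpow_of_nonpos hw0 hcase (by linarith)
      have hmul : ‖w‖ ^ (3:ℝ) * ‖w‖ ^ (q-1) = ‖w‖ ^ (q+2) := by
        rw [← Real.rpow_add hw0]; congr 1; ring
      calc 5 * b ^ ((3:ℝ)/2) * (c/4) ^ ((q-1)/2) = 5 * (‖w‖ ^ (3:ℝ) * (‖z‖/2) ^ (q-1)) := by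
            rw [hb32, hc4]; ring
        _ ≤ 5 * (‖w‖ ^ (3:ℝ) * ‖w‖ ^ (q-1)) := by
            apply mul_le_mul_of_nonneg_left _ (by norm_num)
            exact mul_le_mul_of_nonneg_left hmn (by positivity)
        _ = 5 * ‖w‖ ^ (q+2) := by rw [hmul]
        _ ≤ 24 * ‖w‖ ^ (q+2) := by
            have h0 : (0:ℝ) ≤ ‖w‖ ^ (q+2) := by positivity
            linarith
    refine le_trans (le_trans (le_of_eq ?_) hcore) hfinal
    congr 1
    ring
  · -- crude regime : ‖z‖ < 2‖w‖
    have hz2w : ‖z‖ ≤ 2 * ‖w‖ := by linarith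
    have hwq2 : (0:ℝ) < ‖w‖ ^ (q+2) := Real.rpow_pos_of_pos hw0 _
    have hzq : ‖z‖ ^ q ≤ 2 * ‖w‖ ^ q := by
      calc ‖z‖ ^ q ≤ (2*‖w‖) ^ q := Real.rpow_le_rpow (norm_nonneg z) hz2w hq0.le
        _ = 2 ^ q * ‖w‖ ^ q := Real.mul_rpow (by norm_num) (norm_nonneg w)
        _ ≤ 2 * ‖w‖ ^ q := by
            have h2 : (2:ℝ) ^ q ≤ 2 ^ (1:ℝ) :=
              Real.rpow_le_rpow_of_exponent_le (by norm_num) hq1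
            rw [Real.rpow_one] at h2
            exact mul_le_mul_of_nonneg_right h2 (by positivity)
    have hwfact : ‖w‖ ^ q * ‖w‖ ^ 2 = ‖w‖ ^ (q+2) := by
      rw [← Real.rpow_natCast ‖w‖ 2, ← Real.rpow_add hw0]
      norm_num
    -- term 1
    have hT1 : ‖z + w‖ ^ (q+2) / (q+2) ≤ 14 * ‖w‖ ^ (q+2) := by
      have h1 : ‖z + w‖ ≤ 3 * ‖w‖ := by
        have := norm_add_le z w
        linarith
      have h2 : ‖z + w‖ ^ (q+2) ≤ 27 * ‖w‖ ^ (q+2) := by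
        calc ‖z + w‖ ^ (q+2) ≤ (3*‖w‖) ^ (q+2) :=
              Real.rpow_le_rpow (norm_nonneg _) h1 (by linarith)
          _ = 3 ^ (q+2) * ‖w‖ ^ (q+2) := Real.mul_rpow (by norm_num) (norm_nonneg w)
          _ ≤ 27 * ‖w‖ ^ (q+2) := by
              have h3 : (3:ℝ) ^ (q+2) ≤ 3 ^ (3:ℝ) :=
                Real.rpow_le_rpow_of_exponent_le (by norm_num) (by linarith)
              have h4 : (3:ℝ) ^ (3:ℝ) = 27 := by
                rw [show ((3:ℝ) ^ (3:ℝ) : ℝ) = 3 ^ ((3:ℕ):ℝ) from by norm_num,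
                  Real.rpow_natCast]
                norm_num
              rw [h4] at h3
              exact mul_le_mul_of_nonneg_right h3 hwq2.le
      calc ‖z + w‖ ^ (q+2) / (q+2) ≤ ‖z + w‖ ^ (q+2) / 2 := by
            apply div_le_div_of_nonneg_left (by positivity) (by norm_num)
            linarith
          _ ≤ 27 * ‖w‖ ^ (q+2) / 2 := by linarith
          _ ≤ 14 * ‖w‖ ^ (q+2) := by linarith
    -- term 2
    have hT2 : ‖z‖ ^ (q+2) / (q+2) ≤ 4 * ‖w‖ ^ (q+2) := by
      have h2 : ‖z‖ ^ (q+2) ≤ 8 * ‖w‖ ^ (q+2) := by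
        calc ‖z‖ ^ (q+2) ≤ (2*‖w‖) ^ (q+2) :=
              Real.rpow_le_rpow (norm_nonneg _) hz2w (by linarith)
          _ = 2 ^ (q+2) * ‖w‖ ^ (q+2) := Real.mul_rpow (by norm_num) (norm_nonneg w)
          _ ≤ 8 * ‖w‖ ^ (q+2) := by
              have h3 : (2:ℝ) ^ (q+2) ≤ 2 ^ (3:ℝ) :=
                Real.rpow_le_rpow_of_exponent_le (by norm_num) (by linarith)
              have h4 : (2:ℝ) ^ (3:ℝ) = 8 := by
                rw [show ((2:ℝ) ^ (3:ℝ) : ℝ) = 2 ^ ((3:ℕ):ℝ) from by norm_num,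
                  Real.rpow_natCast]
                norm_num
              rw [h4] at h3
              exact mul_le_mul_of_nonneg_right h3 hwq2.le
      calc ‖z‖ ^ (q+2) / (q+2) ≤ ‖z‖ ^ (q+2) / 2 := by
            apply div_le_div_of_nonneg_left (by positivity) (by norm_num)
            linarith
          _ ≤ 8 * ‖w‖ ^ (q+2) / 2 := by linarith
          _ = 4 * ‖w‖ ^ (q+2) := by ring
    -- term 3
    have hT3 : |(((‖z‖ ^ q : ℝ) : ℂ) * z * (starRingEnd ℂ) w).re| ≤ 4 * ‖w‖ ^ (q+2) := by
      have h1 : |(((‖z‖ ^ q : ℝ) : ℂ) * z * (starRingEnd ℂ) w).re|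
          ≤ ‖z‖ ^ q * ‖z‖ * ‖w‖ := by
        calc |(((‖z‖ ^ q : ℝ) : ℂ) * z * (starRingEnd ℂ) w).re|
            ≤ ‖((‖z‖ ^ q : ℝ) : ℂ) * z * (starRingEnd ℂ) w‖ :=
              Complex.abs_re_le_norm _
          _ = ‖z‖ ^ q * ‖z‖ * ‖w‖ := by
              rw [norm_mul, norm_mul, Complex.norm_conj, Complex.norm_real,
                Real.norm_of_nonneg (by positivity : (0:ℝ) ≤ ‖z‖ ^ q)]
      have h2 : ‖z‖ ^ q * ‖z‖ * ‖w‖ ≤ 2 * ‖w‖ ^ q * (2*‖w‖) * ‖w‖ := by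
        have := mul_le_mul hzq hz2w (norm_nonneg z) (by positivity : (0:ℝ) ≤ 2 * ‖w‖ ^ q)
        exact mul_le_mul_of_nonneg_right this (norm_nonneg w)
      have h3 : 2 * ‖w‖ ^ q * (2*‖w‖) * ‖w‖ = 4 * ‖w‖ ^ (q+2) := by
        rw [← hwfact]
        ring
      linarith
    -- term 4
    have hT4 : |(1/2) * (‖z‖ ^ q * b + q * ‖z‖ ^ (q-2) * a^2)| ≤ 2 * ‖w‖ ^ (q+2) := by
      have hza : ‖z‖ ^ (q-2) * a^2 ≤ ‖z‖ ^ q * b := by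
        have h1 : a^2 ≤ c * b := hab
        have h2 : ‖z‖ ^ (q-2) * c = ‖z‖ ^ q := by
          rw [hcdef, ← Real.rpow_natCast ‖z‖ 2, ← Real.rpow_add hz0]
          norm_num
        calc ‖z‖ ^ (q-2) * a^2 ≤ ‖z‖ ^ (q-2) * (c*b) :=
              mul_le_mul_of_nonneg_left h1 (by positivity)
          _ = ‖z‖ ^ q * b := by rw [← h2]; ring
      have hnn : (0:ℝ) ≤ ‖z‖ ^ q * b + q * ‖z‖ ^ (q-2) * a^2 := by positivity
      rw [abs_mul, _root_.abs_of_nonneg hnn, _root_.abs_of_nonneg (by norm_num : (0:ℝ) ≤ (1:ℝ)/2)]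
      have hzb : ‖z‖ ^ q * b ≤ 2 * ‖w‖ ^ (q+2) := by
        have := mul_le_mul_of_nonneg_right hzq (le_of_lt hb)
        calc ‖z‖ ^ q * b ≤ 2 * ‖w‖ ^ q * b := this
          _ = 2 * ‖w‖ ^ (q+2) := by rw [hbdef, ← hwfact]; ring
      have hq2 : q * ‖z‖ ^ (q-2) * a^2 ≤ 2 * ‖w‖ ^ (q+2) := by
        calc q * ‖z‖ ^ (q-2) * a^2 ≤ 1 * (‖z‖ ^ (q-2) * a^2) := by
              have := mul_le_mul_of_nonneg_right hq1 (by positivity : (0:ℝ) ≤ ‖z‖ ^ (q-2) * a^2)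
              calc q * ‖z‖ ^ (q-2) * a^2 = q * (‖z‖ ^ (q-2) * a^2) := by ring
                _ ≤ 1 * (‖z‖ ^ (q-2) * a^2) := this
          _ = ‖z‖ ^ (q-2) * a^2 := by ring
          _ ≤ ‖z‖ ^ q * b := hza
          _ ≤ 2 * ‖w‖ ^ (q+2) := hzb
      linarith
    -- combine
    have habs4 : ∀ x1 x2 x3 x4 : ℝ, |x1 - x2 - x3 - x4| ≤ |x1| + |x2| + |x3| + |x4| := by
      intro x1 x2 x3 x4
      calc |x1 - x2 - x3 - x4| ≤ |x1 - x2 - x3| + |x4| := abs_sub _ _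
        _ ≤ |x1 - x2| + |x3| + |x4| := by linarith [abs_sub (x1-x2) x3]
        _ ≤ |x1| + |x2| + |x3| + |x4| := by linarith [abs_sub x1 x2]
    have h1 := habs4 (‖z + w‖ ^ (q+2) / (q+2)) (‖z‖ ^ (q+2) / (q+2))
      ((((‖z‖ ^ q : ℝ) : ℂ) * z * (starRingEnd ℂ) w).re)
      ((1/2) * (‖z‖ ^ q * b + q * ‖z‖ ^ (q-2) * a^2))
    have hA1 : |‖z + w‖ ^ (q+2) / (q+2)| = ‖z + w‖ ^ (q+2) / (q+2) := by
      apply _root_.abs_of_nonneg; positivity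
    have hA2 : |‖z‖ ^ (q+2) / (q+2)| = ‖z‖ ^ (q+2) / (q+2) := by
      apply _root_.abs_of_nonneg; positivity
    rw [hA1, hA2] at h1
    calc |‖z + w‖ ^ (q + 2) / (q + 2) - ‖z‖ ^ (q + 2) / (q + 2)
          - (((‖z‖ ^ q : ℝ) : ℂ) * z * (starRingEnd ℂ) w).re
          - (1 / 2) * (‖z‖ ^ q * b + q * ‖z‖ ^ (q - 2) * a ^ 2)|
        ≤ ‖z + w‖ ^ (q+2) / (q+2) + ‖z‖ ^ (q+2) / (q+2)
          + |(((‖z‖ ^ q : ℝ) : ℂ) * z * (starRingEnd ℂ) w).re|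
          + |(1/2) * (‖z‖ ^ q * b + q * ‖z‖ ^ (q-2) * a^2)| := h1
      _ ≤ 14 * ‖w‖ ^ (q+2) + 4 * ‖w‖ ^ (q+2) + 4 * ‖w‖ ^ (q+2) + 2 * ‖w‖ ^ (q+2) := by
          linarith
      _ = 24 * ‖w‖ ^ (q+2) := by ring
end

section
/- For every q with 0 < q ≤ 1 there exists a constant C > 0 such that for all z₁, z₂ ∈ ℂ \ {0} and all w ∈ ℂ: | ( |z₁|^q |w|² + q |z₁|^{q−2} (Re(conj(z₁)·w))² ) − ( |z₂|^q |w|² + q |z₂|^{q−2} (Re(conj(z₂)·w))² ) | ≤ C |z₁ − z₂|^q |w|². -/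
open Complex

private lemma add_rpow_le' {q : ℝ} (hq0 : 0 ≤ q) (hq1 : q ≤ 1) {a b : ℝ} (ha : 0 ≤ a)
    (hb : 0 ≤ b) : (a + b) ^ q ≤ a ^ q + b ^ q := by
  have h := NNReal.coe_le_coe.2 (NNReal.rpow_add_le_add_rpow a.toNNReal b.toNNReal hq0 hq1)
  simpa [NNReal.coe_rpow, Real.toNNReal_add ha hb, Real.coe_toNNReal a ha,
    Real.coe_toNNReal b hb] using h

private lemma rpow_sub_abs_le' {q : ℝ} (hq0 : 0 ≤ q) (hq1 : q ≤ 1) {a b : ℝ} (ha : 0 ≤ a)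
    (hb : 0 ≤ b) : |a ^ q - b ^ q| ≤ |a - b| ^ q := by
  wlog hab : b ≤ a generalizing a b
  · rw [abs_sub_comm, abs_sub_comm a b]; exact this hb ha (le_of_not_ge hab)
  rw [_root_.abs_of_nonneg (by linarith : (0:ℝ) ≤ a - b),
    _root_.abs_of_nonneg (sub_nonneg.2 (Real.rpow_le_rpow hb hab hq0))]
  have h := add_rpow_le' hq0 hq1 (sub_nonneg.2 hab) hb
  rw [sub_add_cancel] at h
  linarith

private lemma abs_sub_le_abs_add_abs' (a b : ℝ) : |a - b| ≤ |a| + |b| := by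
  calc |a - b| = |a + -b| := by rw [sub_eq_add_neg]
    _ ≤ |a| + |-b| := abs_add_le _ _
    _ = |a| + |b| := by rw [abs_neg]

set_option maxHeartbeats 2000000 in
/-- for `0 < q ≤ 1`, the Hessian quadratic form
`B(z; w) = |z|^q|w|² + q|z|^{q−2}(Re(conj(z)w))²` of `F(z) = |z|^{q+2}/(q+2)`
is `q`-Hölder continuous in `z ≠ 0`, uniformly in `w`. -/
theorem hessian_holder (q : ℝ) (hq0 : 0 < q) (hq1 : q ≤ 1) :
    ∃ C : ℝ, 0 < C ∧ ∀ z₁ z₂ : ℂ, z₁ ≠ 0 → z₂ ≠ 0 → ∀ w : ℂ,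
      |(‖z₁‖ ^ q * ‖w‖ ^ 2 + q * ‖z₁‖ ^ (q - 2) * (((starRingEnd ℂ) z₁ * w).re) ^ 2)
          - (‖z₂‖ ^ q * ‖w‖ ^ 2 + q * ‖z₂‖ ^ (q - 2) * (((starRingEnd ℂ) z₂ * w).re) ^ 2)|
        ≤ C * ‖z₁ - z₂‖ ^ q * ‖w‖ ^ 2 := by
  refine ⟨10, by norm_num, ?_⟩
  intro z₁ z₂ h₁ h₂ w
  by_cases hzz : z₁ = z₂
  · subst hzz; simp [Real.zero_rpow hq0.ne']
  have hr₁ : (0:ℝ) < ‖z₁‖ := norm_pos_iff.2 h₁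
  have hr₂ : (0:ℝ) < ‖z₂‖ := norm_pos_iff.2 h₂
  have hd : (0:ℝ) < ‖z₁ - z₂‖ := by rw [norm_pos_iff]; exact sub_ne_zero.2 hzz
  set r₁ := ‖z₁‖ with hr₁def
  set r₂ := ‖z₂‖ with hr₂def
  set d := ‖z₁ - z₂‖ with hddef
  set W := ‖w‖ with hWdef
  have hW : (0:ℝ) ≤ W := norm_nonneg _
  have key : ∀ z : ℂ, (0:ℝ) < ‖z‖ →
      ‖z‖ ^ (q - 2) * ((starRingEnd ℂ) z * w).re ^ 2
        = ‖z‖ ^ q * (((starRingEnd ℂ) z * w).re / ‖z‖) ^ 2 := by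
    intro z hz
    rw [div_pow, Real.rpow_sub hz, Real.rpow_two]
    field_simp
  set a₁ : ℝ := ((starRingEnd ℂ) z₁ * w).re / r₁ with ha₁def
  set a₂ : ℝ := ((starRingEnd ℂ) z₂ * w).re / r₂ with ha₂def
  have habs : ∀ z : ℂ, z ≠ 0 → |((starRingEnd ℂ) z * w).re / ‖z‖| ≤ W := by
    intro z hz
    have h0 : (0:ℝ) < ‖z‖ := norm_pos_iff.2 hz
    rw [abs_div, _root_.abs_of_pos h0, div_le_iff₀ h0]
    calc |((starRingEnd ℂ) z * w).re| ≤ ‖(starRingEnd ℂ) z * w‖ := by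
          exact Complex.abs_re_le_norm _
      _ = ‖z‖ * W := by rw [norm_mul, RCLike.norm_conj]
      _ = W * ‖z‖ := by ring
  have ha₁W : |a₁| ≤ W := habs z₁ h₁
  have ha₂W : |a₂| ≤ W := habs z₂ h₂
  set u₁ : ℂ := (r₁ : ℂ)⁻¹ * z₁ with hu₁def
  set u₂ : ℂ := (r₂ : ℂ)⁻¹ * z₂ with hu₂def
  have hu₁n : ‖u₁‖ = 1 := by
    rw [hu₁def, norm_mul, norm_inv, Complex.norm_real, Real.norm_eq_abs, _root_.abs_of_pos hr₁]
    exact inv_mul_cancel₀ hr₁.ne'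
  have hu₂n : ‖u₂‖ = 1 := by
    rw [hu₂def, norm_mul, norm_inv, Complex.norm_real, Real.norm_eq_abs, _root_.abs_of_pos hr₂]
    exact inv_mul_cancel₀ hr₂.ne'
  have hr₁c : (r₁ : ℂ) ≠ 0 := by exact_mod_cast hr₁.ne'
  have hr₂c : (r₂ : ℂ) ≠ 0 := by exact_mod_cast hr₂.ne'
  have hare : ∀ (z : ℂ), z ≠ 0 →
      ((starRingEnd ℂ) z * w).re / ‖z‖ = ((starRingEnd ℂ) ((‖z‖ : ℂ)⁻¹ * z) * w).re := by
    intro z hz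
    rw [map_mul, mul_assoc, ← Complex.ofReal_inv, Complex.conj_ofReal, Complex.re_ofReal_mul,
      div_eq_inv_mul]
  have hadiff : |a₁ - a₂| ≤ ‖u₁ - u₂‖ * W := by
    rw [ha₁def, ha₂def, hare z₁ h₁, hare z₂ h₂]
    have e : ((starRingEnd ℂ) u₁ * w).re - ((starRingEnd ℂ) u₂ * w).re
        = ((starRingEnd ℂ) (u₁ - u₂) * w).re := by
      rw [map_sub, sub_mul, Complex.sub_re]
    rw [e]
    calc |((starRingEnd ℂ) (u₁ - u₂) * w).re| ≤ ‖(starRingEnd ℂ) (u₁ - u₂) * w‖ := by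
          exact Complex.abs_re_le_norm _
      _ = ‖u₁ - u₂‖ * W := by rw [norm_mul, RCLike.norm_conj]
  have hrr : |r₁ - r₂| ≤ d := abs_norm_sub_norm_le z₁ z₂
  have h1u : r₁ * ‖u₁ - u₂‖ ≤ 2 * d := by
    have e1 : (r₁ : ℂ) * (u₁ - u₂) = (z₁ - z₂) + ((r₂ : ℂ) - r₁) * u₂ := by
      rw [hu₁def, hu₂def]; field_simp; ring
    have e2 : ‖(r₁ : ℂ) * (u₁ - u₂)‖ = r₁ * ‖u₁ - u₂‖ := by
      rw [norm_mul, Complex.norm_real, Real.norm_eq_abs, _root_.abs_of_pos hr₁]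
    have h2 : r₁ * ‖u₁ - u₂‖ ≤ ‖z₁ - z₂‖ + ‖((r₂ : ℂ) - r₁) * u₂‖ := by
      rw [← e2, e1]; exact norm_add_le _ _
    have h3 : ‖((r₂ : ℂ) - r₁) * u₂‖ = |r₂ - r₁| := by
      rw [norm_mul, hu₂n, mul_one, ← Complex.ofReal_sub, Complex.norm_real, Real.norm_eq_abs]
    rw [h3] at h2
    have h4 : |r₂ - r₁| ≤ d := by rw [abs_sub_comm]; exact hrr
    have h5 : ‖z₁ - z₂‖ = d := rfl
    linarith [h2, h4, h5.le]
  have h2u : r₂ * ‖u₁ - u₂‖ ≤ 2 * d := by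
    have e1 : (r₂ : ℂ) * (u₁ - u₂) = (z₁ - z₂) + ((r₂ : ℂ) - r₁) * u₁ := by
      rw [hu₁def, hu₂def]; field_simp; ring
    have e2 : ‖(r₂ : ℂ) * (u₁ - u₂)‖ = r₂ * ‖u₁ - u₂‖ := by
      rw [norm_mul, Complex.norm_real, Real.norm_eq_abs, _root_.abs_of_pos hr₂]
    have h2 : r₂ * ‖u₁ - u₂‖ ≤ ‖z₁ - z₂‖ + ‖((r₂ : ℂ) - r₁) * u₁‖ := by
      rw [← e2, e1]; exact norm_add_le _ _
    have h3 : ‖((r₂ : ℂ) - r₁) * u₁‖ = |r₂ - r₁| := by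
      rw [norm_mul, hu₁n, mul_one, ← Complex.ofReal_sub, Complex.norm_real, Real.norm_eq_abs]
    rw [h3] at h2
    have h4 : |r₂ - r₁| ≤ d := by rw [abs_sub_comm]; exact hrr
    have h5 : ‖z₁ - z₂‖ = d := rfl
    linarith [h2, h4, h5.le]
  set m := max r₁ r₂ with hmdef
  have hm : (0:ℝ) < m := lt_max_of_lt_left hr₁
  have hmu : m * ‖u₁ - u₂‖ ≤ 2 * d := by
    rcases max_cases r₁ r₂ with ⟨h, _⟩ | ⟨h, _⟩ <;> rw [hmdef, h]
    exacts [h1u, h2u]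
  have hrw : (r₁ ^ q * W ^ 2 + q * r₁ ^ (q - 2) * (((starRingEnd ℂ) z₁ * w).re) ^ 2)
          - (r₂ ^ q * W ^ 2 + q * r₂ ^ (q - 2) * (((starRingEnd ℂ) z₂ * w).re) ^ 2)
      = (r₁ ^ q - r₂ ^ q) * (W ^ 2 + q * a₁ ^ 2) + q * r₂ ^ q * ((a₁ - a₂) * (a₁ + a₂)) := by
    rw [mul_assoc q (r₁ ^ (q-2)), mul_assoc q (r₂ ^ (q-2)), key z₁ hr₁, key z₂ hr₂]
    ring
  have hB1 : |r₁ ^ q - r₂ ^ q| ≤ d ^ q := by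
    calc |r₁ ^ q - r₂ ^ q| ≤ |r₁ - r₂| ^ q := rpow_sub_abs_le' hq0.le hq1 hr₁.le hr₂.le
      _ ≤ d ^ q := Real.rpow_le_rpow (abs_nonneg _) hrr hq0.le
  have ha₁sq : a₁ ^ 2 ≤ W ^ 2 := by
    rw [← _root_.sq_abs]; exact pow_le_pow_left₀ (abs_nonneg a₁) ha₁W 2
  have ha₂sq : a₂ ^ 2 ≤ W ^ 2 := by
    rw [← _root_.sq_abs]; exact pow_le_pow_left₀ (abs_nonneg a₂) ha₂W 2
  have hsum : |a₁ + a₂| ≤ 2 * W := by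
    calc |a₁ + a₂| ≤ |a₁| + |a₂| := abs_add_le _ _
      _ ≤ 2 * W := by linarith
  have hdq : (0:ℝ) < d ^ q := Real.rpow_pos_of_pos hd q
  have hr₂q : (0:ℝ) < r₂ ^ q := Real.rpow_pos_of_pos hr₂ q
  have hr₁q : (0:ℝ) < r₁ ^ q := Real.rpow_pos_of_pos hr₁ q
  have hmq : (0:ℝ) < m ^ q := Real.rpow_pos_of_pos hm q
  rcases le_or_gt d m with hdm | hmd
  · -- Lipschitz regime
    rw [hrw]
    have habs_total : |(r₁ ^ q - r₂ ^ q) * (W ^ 2 + q * a₁ ^ 2)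
          + q * r₂ ^ q * ((a₁ - a₂) * (a₁ + a₂))|
        ≤ |r₁ ^ q - r₂ ^ q| * (W ^ 2 + q * a₁ ^ 2)
          + q * r₂ ^ q * (|a₁ - a₂| * |a₁ + a₂|) := by
      calc _ ≤ |(r₁ ^ q - r₂ ^ q) * (W ^ 2 + q * a₁ ^ 2)|
              + |q * r₂ ^ q * ((a₁ - a₂) * (a₁ + a₂))| := abs_add_le _ _
        _ = |r₁ ^ q - r₂ ^ q| * (W ^ 2 + q * a₁ ^ 2)
              + q * r₂ ^ q * (|a₁ - a₂| * |a₁ + a₂|) := by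
            rw [abs_mul, abs_mul, abs_mul, abs_mul,
              _root_.abs_of_nonneg (by positivity : (0:ℝ) ≤ W ^ 2 + q * a₁ ^ 2),
              _root_.abs_of_pos hq0, _root_.abs_of_pos hr₂q]
    have hmono : m ^ q * ‖u₁ - u₂‖ ≤ 2 * d ^ q := by
      rw [← mul_le_mul_iff_left₀ hm]
      have step2 : m ^ q * (m * ‖u₁ - u₂‖) ≤ m ^ q * (2 * d) :=
        mul_le_mul_of_nonneg_left hmu hmq.le
      have step3 : m ^ q * d ≤ d ^ q * m := by
        have hle : d ^ (1 - q) ≤ m ^ (1 - q) := Real.rpow_le_rpow hd.le hdm (by linarith)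
        have hd2 : d ^ q * d ^ (1 - q) = d := by rw [← Real.rpow_add hd]; norm_num
        have hm2 : m ^ q * m ^ (1 - q) = m := by rw [← Real.rpow_add hm]; norm_num
        calc m ^ q * d = (m ^ q * d ^ q) * d ^ (1 - q) := by rw [mul_assoc, hd2]
          _ ≤ (m ^ q * d ^ q) * m ^ (1 - q) := by
              apply mul_le_mul_of_nonneg_left hle; positivity
          _ = d ^ q * (m ^ q * m ^ (1 - q)) := by ring
          _ = d ^ q * m := by rw [hm2]
      calc m ^ q * ‖u₁ - u₂‖ * m = m ^ q * (m * ‖u₁ - u₂‖) := by ring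
        _ ≤ m ^ q * (2 * d) := step2
        _ = 2 * (m ^ q * d) := by ring
        _ ≤ 2 * (d ^ q * m) := by linarith
        _ = 2 * d ^ q * m := by ring
    have hpiece : q * r₂ ^ q * (|a₁ - a₂| * |a₁ + a₂|) ≤ 4 * q * d ^ q * W ^ 2 := by
      have h1 : |a₁ - a₂| * |a₁ + a₂| ≤ (‖u₁ - u₂‖ * W) * (2 * W) :=
        mul_le_mul hadiff hsum (abs_nonneg _) (by positivity)
      have h2 : r₂ ^ q ≤ m ^ q := Real.rpow_le_rpow hr₂.le (le_max_right _ _) hq0.le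
      have h3 : r₂ ^ q * (|a₁ - a₂| * |a₁ + a₂|) ≤ m ^ q * ((‖u₁ - u₂‖ * W) * (2 * W)) :=
        mul_le_mul h2 h1 (mul_nonneg (abs_nonneg _) (abs_nonneg _)) hmq.le
      have h4 : m ^ q * ((‖u₁ - u₂‖ * W) * (2 * W)) = 2 * (m ^ q * ‖u₁ - u₂‖) * W ^ 2 := by ring
      have h5 : 2 * (m ^ q * ‖u₁ - u₂‖) * W ^ 2 ≤ 2 * (2 * d ^ q) * W ^ 2 := by
        have h := mul_le_mul_of_nonneg_right hmono (sq_nonneg W)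
        calc 2 * (m ^ q * ‖u₁ - u₂‖) * W ^ 2 = 2 * (m ^ q * ‖u₁ - u₂‖ * W ^ 2) := by ring
          _ ≤ 2 * (2 * d ^ q * W ^ 2) := by linarith
          _ = 2 * (2 * d ^ q) * W ^ 2 := by ring
      have h6 : r₂ ^ q * (|a₁ - a₂| * |a₁ + a₂|) ≤ 4 * d ^ q * W ^ 2 := by
        rw [h4] at h3; linarith
      calc q * r₂ ^ q * (|a₁ - a₂| * |a₁ + a₂|) = q * (r₂ ^ q * (|a₁ - a₂| * |a₁ + a₂|)) := by
            ring
        _ ≤ q * (4 * d ^ q * W ^ 2) := mul_le_mul_of_nonneg_left h6 hq0.le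
        _ = 4 * q * d ^ q * W ^ 2 := by ring
    have hpiece2 : |r₁ ^ q - r₂ ^ q| * (W ^ 2 + q * a₁ ^ 2) ≤ d ^ q * (1 + q) * W ^ 2 := by
      have hWa : W ^ 2 + q * a₁ ^ 2 ≤ (1 + q) * W ^ 2 := by
        have := mul_le_mul_of_nonneg_left ha₁sq hq0.le
        linarith
      calc |r₁ ^ q - r₂ ^ q| * (W ^ 2 + q * a₁ ^ 2) ≤ d ^ q * ((1 + q) * W ^ 2) :=
            mul_le_mul hB1 hWa (by positivity) hdq.le
        _ = d ^ q * (1 + q) * W ^ 2 := by ring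
    calc _ ≤ |r₁ ^ q - r₂ ^ q| * (W ^ 2 + q * a₁ ^ 2) + q * r₂ ^ q * (|a₁ - a₂| * |a₁ + a₂|) :=
          habs_total
      _ ≤ d ^ q * (1 + q) * W ^ 2 + 4 * q * d ^ q * W ^ 2 := by linarith
      _ ≤ 10 * d ^ q * W ^ 2 := by
          have hpos : (0:ℝ) ≤ d ^ q * W ^ 2 := by positivity
          nlinarith [hpos, hq0.le, hq1]
  · -- crude regime : m < d
    have hX₁ : |r₁ ^ q * W ^ 2 + q * r₁ ^ (q - 2) * (((starRingEnd ℂ) z₁ * w).re) ^ 2|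
        ≤ 2 * d ^ q * W ^ 2 := by
      rw [mul_assoc q (r₁ ^ (q-2)), key z₁ hr₁]
      rw [_root_.abs_of_nonneg (by positivity)]
      have hrq : r₁ ^ q ≤ d ^ q :=
        Real.rpow_le_rpow hr₁.le (le_trans (le_max_left _ _) hmd.le) hq0.le
      nlinarith [mul_nonneg (sub_nonneg.2 hrq) (sq_nonneg W),
        mul_nonneg hr₁q.le (sub_nonneg.2 ha₁sq),
        mul_nonneg (mul_nonneg (by linarith : (0:ℝ) ≤ 1 - q) hr₁q.le) (sq_nonneg a₁)]
    have hX₂ : |r₂ ^ q * W ^ 2 + q * r₂ ^ (q - 2) * (((starRingEnd ℂ) z₂ * w).re) ^ 2|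
        ≤ 2 * d ^ q * W ^ 2 := by
      rw [mul_assoc q (r₂ ^ (q-2)), key z₂ hr₂]
      rw [_root_.abs_of_nonneg (by positivity)]
      have hrq : r₂ ^ q ≤ d ^ q :=
        Real.rpow_le_rpow hr₂.le (le_trans (le_max_right _ _) hmd.le) hq0.le
      nlinarith [mul_nonneg (sub_nonneg.2 hrq) (sq_nonneg W),
        mul_nonneg hr₂q.le (sub_nonneg.2 ha₂sq),
        mul_nonneg (mul_nonneg (by linarith : (0:ℝ) ≤ 1 - q) hr₂q.le) (sq_nonneg a₂)]
    calc _ ≤ |r₁ ^ q * W ^ 2 + q * r₁ ^ (q - 2) * (((starRingEnd ℂ) z₁ * w).re) ^ 2|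
          + |r₂ ^ q * W ^ 2 + q * r₂ ^ (q - 2) * (((starRingEnd ℂ) z₂ * w).re) ^ 2| :=
          abs_sub_le_abs_add_abs' _ _
      _ ≤ 2 * d ^ q * W ^ 2 + 2 * d ^ q * W ^ 2 := add_le_add hX₁ hX₂
      _ ≤ 10 * d ^ q * W ^ 2 := by
          have hpos : (0:ℝ) ≤ d ^ q * W ^ 2 := by positivity
          nlinarith [hpos]
end
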